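/- arXiv:1610.00145 — 8 statements merged into one kernel-verified Lean document; each statement's English description precedes it below -/
import Mathlib

section
/- Let X be a metric space with basepoint x and H a subgroup of π₁(X,x) such that ⋃H (the set of loops representing elements of H) belongs to a pointclass 𝒫 closed under continuous preimages. Then for each fixed loop l₀, the left coset set ⋃([l₀]H) of loops homotopic to a loop of the form l₀ * l' with l' ∈ ⋃H is also in 𝒫. -/
open FundamentalGroup

attribute [local instance] Path.Homotopic.setoid

/-- The set of loops at `x` representing elements of the subgroup `H` of `π₁(X, x)`. -/
def loopsIn {X : Type} [TopologicalSpace X] {x : X} (H : Subgroup (FundamentalGroup X x)) :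
    Set (Path x x) :=
  {p : Path x x |
    FundamentalGroup.fromPath (X := TopCat.of X) (⟦p⟧ : Path.Homotopic.Quotient x x) ∈ H}

theorem loopsIn_congr {X : Type} [TopologicalSpace X] {x : X}
    (H : Subgroup (FundamentalGroup X x)) {p q : Path x x} (h : p.Homotopic q)
    (hq : q ∈ loopsIn H) : p ∈ loopsIn H := by
  have : (⟦p⟧ : Path.Homotopic.Quotient x x) = ⟦q⟧ := Quotient.sound h
  show FundamentalGroup.fromPath (X := TopCat.of X) (⟦p⟧ : Path.Homotopic.Quotient x x) ∈ H
  rw [this]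
  exact hq

/-- If `𝒫` is a pointclass closed under continuous preimages and `H ≤ π₁(X, x)` has
`⋃H ∈ 𝒫`, then for each fixed loop `l₀` the left coset set `⋃([l₀]H)`, consisting of the
loops homotopic to some `l₀ * l'` with `l' ∈ ⋃H`, is in `𝒫`. -/
theorem coset_mem_pointclass
    (P : (Z : Type) → [inst : TopologicalSpace Z] → Set (Set Z))
    (hP : ∀ (Z W : Type) [TopologicalSpace Z] [TopologicalSpace W] (f : Z → W),
      Continuous f → ∀ S ∈ P W, f ⁻¹' S ∈ P Z)
    {X : Type} [MetricSpace X] [PathConnectedSpace X] {x : X}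
    (H : Subgroup (FundamentalGroup X x))
    (hH : loopsIn H ∈ P (Path x x)) (l₀ : Path x x) :
    {l : Path x x | ∃ l' ∈ loopsIn H, l.Homotopic (l₀.trans l')} ∈ P (Path x x) := by
  have key : {l : Path x x | ∃ l' ∈ loopsIn H, l.Homotopic (l₀.trans l')}
      = (fun l : Path x x => l₀.symm.trans l) ⁻¹' loopsIn H := by
    ext l
    simp only [Set.mem_setOf_eq, Set.mem_preimage]
    constructor
    · rintro ⟨l', hl', hhom⟩
      refine loopsIn_congr H ?_ hl'
      have h1 : (l₀.symm.trans l).Homotopic (l₀.symm.trans (l₀.trans l')) :=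
        Path.Homotopic.hcomp (Path.Homotopic.refl _) hhom
      have h2 : (l₀.symm.trans (l₀.trans l')).Homotopic ((l₀.symm.trans l₀).trans l') :=
        ⟨(Path.Homotopy.transAssoc l₀.symm l₀ l').symm⟩
      have h3 : ((l₀.symm.trans l₀).trans l').Homotopic ((Path.refl x).trans l') :=
        Path.Homotopic.hcomp ⟨(Path.Homotopy.reflSymmTrans l₀).symm⟩ (Path.Homotopic.refl _)
      have h4 : ((Path.refl x).trans l').Homotopic l' := ⟨Path.Homotopy.reflTrans l'⟩
      exact ((h1.trans h2).trans h3).trans h4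
    · intro hmem
      refine ⟨l₀.symm.trans l, hmem, ?_⟩
      have h1 : l.Homotopic ((Path.refl x).trans l) := ⟨(Path.Homotopy.reflTrans l).symm⟩
      have h2 : ((Path.refl x).trans l).Homotopic ((l₀.trans l₀.symm).trans l) :=
        Path.Homotopic.hcomp ⟨Path.Homotopy.reflTransSymm l₀⟩ (Path.Homotopic.refl _)
      have h3 : ((l₀.trans l₀.symm).trans l).Homotopic (l₀.trans (l₀.symm.trans l)) :=
        ⟨Path.Homotopy.transAssoc l₀ l₀.symm l⟩
      exact (h1.trans h2).trans h3
  rw [key]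
  exact hP _ _ _ (continuous_const.path_trans continuous_id) _ hH
end

section
/- Let X be a locally path-connected metric space and G a normal subgroup of π₁(X). If there exists an open cover 𝒰 of X such that every loop contained entirely in an element of 𝒰 represents an element of G, then G is open (the set of loops representing elements of G is open in each loop space L_x). -/
open FundamentalGroup

attribute [local instance] Path.Homotopic.setoid

/-- A loop `p` based at an arbitrary point `y` represents an element of the normal subgroup
`G ⊴ π₁(X, x₀)` (regarded as basepoint-free) if conjugating it back to the basepoint `x₀`
along some path lands in `G`. -/
def loopInBF {X : Type} [TopologicalSpace X] {x₀ : X}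
    (G : Subgroup (FundamentalGroup X x₀)) {y : X} (p : Path y y) : Prop :=
  ∃ ρ : Path x₀ y,
    FundamentalGroup.fromPath (X := TopCat.of X)
      (⟦(ρ.trans p).trans ρ.symm⟧ : Path.Homotopic.Quotient x₀ x₀) ∈ G

namespace OCP

open CategoryTheory FundamentalGroupoid FundamentalGroup

variable {Y : Type} [TopologicalSpace Y] {x₀ : Y}

/-- The homotopy class of a path, as an arrow in the fundamental groupoid. -/
def hcl {a b : Y} (u : Path a b) : FundamentalGroupoid.mk a ⟶ FundamentalGroupoid.mk b := ⟦u⟧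

lemma hcl_trans {a b c : Y} (u : Path a b) (v : Path b c) :
    hcl (u.trans v) = hcl u ≫ hcl v := rfl

lemma hcl_symm {a b : Y} (u : Path a b) : hcl u.symm = Groupoid.inv (hcl u) := rfl

lemma hcl_refl (a : Y) : hcl (Path.refl a) = 𝟙 (FundamentalGroupoid.mk a) := rfl

lemma cast_rfl_rfl {a b : Y} (u : Path a b) : u.cast rfl rfl = u := rfl

lemma hcl_cast {a b a' b' : Y} (u : Path a b) (hx : a' = a) (hy : b' = b) :
    hcl (u.cast hx hy) =
      eqToHom (by rw [hx]) ≫ hcl u ≫ eqToHom (by rw [hy] : FundamentalGroupoid.mk b = _) := by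
  subst hx; subst hy
  simp [cast_rfl_rfl]

lemma fromArrow_comp {x : Y} (f g : FundamentalGroupoid.mk x ⟶ FundamentalGroupoid.mk x) :
    fromArrow (X := TopCat.of Y) (f ≫ g) =
      fromArrow (X := TopCat.of Y) g * fromArrow (X := TopCat.of Y) f := rfl

lemma fromArrow_id {x : Y} :
    fromArrow (X := TopCat.of Y) (𝟙 (FundamentalGroupoid.mk x)) = 1 := rfl

lemma fromArrow_inv {x : Y} (f : FundamentalGroupoid.mk x ⟶ FundamentalGroupoid.mk x) :
    fromArrow (X := TopCat.of Y) (Groupoid.inv f) = (fromArrow (X := TopCat.of Y) f)⁻¹ := by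
  refine eq_inv_of_mul_eq_one_left ?_
  rw [← fromArrow_comp, Groupoid.comp_inv, fromArrow_id]

/-- The basepoint-free membership predicate, at the level of arrows in the fundamental
groupoid. -/
def bfa (G : Subgroup (FundamentalGroup Y x₀)) {y : Y}
    (f : FundamentalGroupoid.mk y ⟶ FundamentalGroupoid.mk y) : Prop :=
  ∃ h : FundamentalGroupoid.mk x₀ ⟶ FundamentalGroupoid.mk y,
    fromArrow (X := TopCat.of Y) (h ≫ f ≫ Groupoid.inv h) ∈ G

variable (G : Subgroup (FundamentalGroup Y x₀))

lemma bfa_forall [G.Normal] {y : Y} {f : FundamentalGroupoid.mk y ⟶ FundamentalGroupoid.mk y}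
    (hf : bfa G f) (k : FundamentalGroupoid.mk x₀ ⟶ FundamentalGroupoid.mk y) :
    fromArrow (X := TopCat.of Y) (k ≫ f ≫ Groupoid.inv k) ∈ G := by
  obtain ⟨h, hg⟩ := hf
  have key : k ≫ f ≫ Groupoid.inv k =
      (k ≫ Groupoid.inv h) ≫ (h ≫ f ≫ Groupoid.inv h) ≫ Groupoid.inv (k ≫ Groupoid.inv h) := by
    simp [Groupoid.inv_eq_inv]
  rw [key, fromArrow_comp, fromArrow_comp, fromArrow_inv]
  exact Subgroup.Normal.conj_mem' ‹G.Normal› _ hg _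

lemma bfa_comp [G.Normal] {y : Y} {f g : FundamentalGroupoid.mk y ⟶ FundamentalGroupoid.mk y}
    (hf : bfa G f) (hg : bfa G g) : bfa G (f ≫ g) := by
  obtain ⟨h, -⟩ := id hf
  refine ⟨h, ?_⟩
  have key : h ≫ (f ≫ g) ≫ Groupoid.inv h =
      (h ≫ f ≫ Groupoid.inv h) ≫ (h ≫ g ≫ Groupoid.inv h) := by
    simp [Groupoid.inv_eq_inv]
  rw [key, fromArrow_comp]
  exact G.mul_mem (bfa_forall G hg h) (bfa_forall G hf h)

lemma bfa_inv [G.Normal] {y : Y} {f : FundamentalGroupoid.mk y ⟶ FundamentalGroupoid.mk y}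
    (hf : bfa G f) : bfa G (Groupoid.inv f) := by
  obtain ⟨h, hg⟩ := hf
  refine ⟨h, ?_⟩
  have key : h ≫ Groupoid.inv f ≫ Groupoid.inv h =
      Groupoid.inv (h ≫ f ≫ Groupoid.inv h) := by
    simp [Groupoid.inv_eq_inv]
  rw [key, fromArrow_inv]
  exact G.inv_mem hg

lemma bfa_conj [G.Normal] [PathConnectedSpace Y] {y z : Y}
    {f : FundamentalGroupoid.mk y ⟶ FundamentalGroupoid.mk y}
    (hf : bfa G f) (g : FundamentalGroupoid.mk z ⟶ FundamentalGroupoid.mk y) :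
    bfa G (g ≫ f ≫ Groupoid.inv g) := by
  obtain ⟨ρ⟩ := PathConnectedSpace.joined x₀ z
  refine ⟨hcl ρ, ?_⟩
  have key : hcl ρ ≫ (g ≫ f ≫ Groupoid.inv g) ≫ Groupoid.inv (hcl ρ) =
      (hcl ρ ≫ g) ≫ f ≫ Groupoid.inv (hcl ρ ≫ g) := by
    simp [Groupoid.inv_eq_inv]
  rw [key]
  exact bfa_forall G hf _

lemma trunc_self {a b : Y} (γ : Path a b) {t : ℝ} (h : t ≤ t) :
    γ.truncateOfLE h = Path.refl (γ.extend t) := by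
  ext θ
  show γ.extend (min (max (θ:ℝ) t) t) = γ.extend t
  rw [min_eq_right (le_max_right _ _)]

lemma trunc_full {a b : Y} (γ : Path a b) {s u : ℝ} (h : s ≤ u) (hs : s = 0) (hu : u = 1) :
    γ.truncateOfLE h = γ.cast (by rw [hs, γ.extend_zero]) (by rw [hu, γ.extend_one]) := by
  subst hs; subst hu
  ext θ
  show γ.extend (min (max (θ:ℝ) 0) 1) = _
  rw [Path.cast_coe, max_eq_left θ.2.1, min_eq_left θ.2.2, Path.extend_extends' γ θ]

lemma trunc_trans {a b : Y} (γ : Path a b) {s t u : ℝ} (h0 : 0 ≤ s) (hst : s ≤ t) (htu : t ≤ u)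
    (hu : u ≤ 1) :
    hcl (γ.truncateOfLE (hst.trans htu)) =
      hcl (γ.truncateOfLE hst) ≫ hcl (γ.truncateOfLE htu) := by
  have ht0 : (0:ℝ) ≤ t := h0.trans hst
  have ht1 : t ≤ 1 := htu.trans hu
  rw [← hcl_trans]
  refine Quotient.sound ?_
  have hmem : ∀ θ : unitInterval,
      (if (θ:ℝ) ≤ 1/2 then min (2*(θ:ℝ)) t else max (2*(θ:ℝ)-1) t) ∈ unitInterval := by
    intro θ
    split_ifs with hθ
    · constructor
      · exact le_min (mul_nonneg zero_le_two θ.2.1) ht0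
      · exact (min_le_left _ _).trans (by linarith)
    · constructor
      · exact le_trans ht0 (le_max_right _ _)
      · exact max_le (by linarith [θ.2.2]) ht1
  set f : unitInterval → unitInterval := fun θ =>
    ⟨if (θ:ℝ) ≤ 1/2 then min (2*(θ:ℝ)) t else max (2*(θ:ℝ)-1) t, hmem θ⟩ with hf_def
  have hfc : Continuous f := by
    apply Continuous.subtype_mk
    apply Continuous.if_le
    · exact (continuous_const.mul continuous_subtype_val).min continuous_const
    · exact (((continuous_const.mul continuous_subtype_val).sub continuous_const)).max
        continuous_const
    · exact continuous_subtype_val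
    · exact continuous_const
    · intro θ hθ
      rw [hθ]
      norm_num
      rw [min_eq_right ht1, max_eq_right ht0]
  have hf0 : f 0 = 0 := by
    simp only [hf_def]
    ext
    norm_num
    exact ht0
  have hf1 : f 1 = 1 := by
    simp only [hf_def]
    ext
    norm_num
    exact ht1
  have key : (γ.truncateOfLE (hst.trans htu)).reparam f hfc hf0 hf1 =
      (γ.truncateOfLE hst).trans (γ.truncateOfLE htu) := by
    ext θ
    rw [Path.coe_reparam]
    show γ.extend (min (max ((f θ):ℝ) s) u) = _
    rw [Path.trans_apply]
    split_ifs with hθ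
    · show _ = γ.extend (min (max ((2:ℝ)*θ) s) t)
      have : ((f θ):ℝ) = min (2*(θ:ℝ)) t := by simp only [hf_def]; rw [if_pos hθ]
      rw [this]
      congr 1
      rcases le_total ((2:ℝ)*θ) t with h1 | h1 <;> rcases le_total ((2:ℝ)*θ) s with h2 | h2 <;>
        simp [min_def, max_def] <;> split_ifs <;> linarith
    · show _ = γ.extend (min (max ((2:ℝ)*θ-1) t) u)
      have : ((f θ):ℝ) = max (2*(θ:ℝ)-1) t := by simp only [hf_def]; rw [if_neg hθ]
      rw [this]
      congr 1
      rw [max_eq_left (hst.trans (le_max_right _ _))]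
  exact ⟨(Path.Homotopy.reparam (γ.truncateOfLE (hst.trans htu)) f hfc hf0 hf1).cast rfl key⟩

end OCP

open CategoryTheory FundamentalGroupoid OCP

lemma loopInBF_iff_bfa {X : Type} [TopologicalSpace X] {x₀ : X}
    (G : Subgroup (FundamentalGroup X x₀)) {y : X} (p : Path y y) :
    loopInBF G p ↔ bfa (x₀ := x₀) G (hcl p) := by
  constructor
  · rintro ⟨ρ, hρ⟩
    refine ⟨hcl ρ, ?_⟩
    have key : hcl ρ ≫ hcl p ≫ Groupoid.inv (hcl ρ) =
        hcl ((ρ.trans p).trans ρ.symm) := by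
      rw [hcl_trans, hcl_trans, hcl_symm, Category.assoc]
    rw [key]
    exact hρ
  · rintro ⟨h, hh⟩
    obtain ⟨ρ, rfl⟩ := Quotient.exists_rep h
    refine ⟨ρ, ?_⟩
    have key : hcl ρ ≫ hcl p ≫ Groupoid.inv (hcl ρ) =
        hcl ((ρ.trans p).trans ρ.symm) := by
      rw [hcl_trans, hcl_trans, hcl_symm, Category.assoc]
    have hh' : FundamentalGroup.fromArrow (X := TopCat.of X)
        (hcl ρ ≫ hcl p ≫ Groupoid.inv (hcl ρ)) ∈ G := hh
    rw [key] at hh'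
    exact hh'

/-- Let `X` be a locally path-connected metric space and `G ⊴ π₁(X)` a normal subgroup.
If there is an open cover `𝒰` of `X` such that every loop contained entirely in an element
of `𝒰` represents an element of `G`, then `G` is open. -/
theorem open_of_open_cover {X : Type} [MetricSpace X] [PathConnectedSpace X]
    [LocallyPathConnectedSpace X] (x₀ : X) (G : Subgroup (FundamentalGroup X x₀)) [G.Normal]
    (𝒰 : Set (Set X)) (hopen : ∀ U ∈ 𝒰, IsOpen U) (hcover : ⋃₀ 𝒰 = Set.univ)
    (hloops : ∀ U ∈ 𝒰, ∀ (y : X) (p : Path y y), Set.range p ⊆ U → loopInBF G p) :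
    ∀ y : X, IsOpen {p : Path y y | loopInBF G p} := by
  intro y
  rw [isOpen_iff_forall_mem_open]
  intro p hp
  rw [Set.mem_setOf_eq, loopInBF_iff_bfa] at hp
  -- main step : find `ε`
  have main : ∃ ε > 0, ∀ q : Path y y, (∀ t, dist (p t) (q t) < ε) → loopInBF G q := by
    -- Lebesgue number for the cover of the (compact) image of `p`
    obtain ⟨δ, hδ0, hδ⟩ := lebesgue_number_lemma_of_metric_sUnion
      (isCompact_range p.continuous) hopen (by rw [hcover]; exact Set.subset_univ _)
    -- uniform continuity of `p`
    obtain ⟨η, hη0, hη⟩ := Metric.uniformContinuous_iff.mp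
      (CompactSpace.uniformContinuous_of_continuous p.continuous) (δ/4) (by linarith)
    have hext : ∀ s t : ℝ, s ∈ Set.Icc (0:ℝ) 1 → t ∈ Set.Icc (0:ℝ) 1 → |s - t| < η →
        dist (p.extend s) (p.extend t) < δ/4 := by
      intro s t hs ht h
      rw [Path.extend_apply p hs, Path.extend_apply p ht]
      exact hη (by rwa [Subtype.dist_eq, Real.dist_eq])
    -- the partition
    obtain ⟨n', hn'⟩ := exists_nat_one_div_lt hη0
    set n : ℕ := n' + 1 with hn_def
    have hn0 : (0:ℝ) < (n:ℝ) := by positivity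
    have h1n : 1/(n:ℝ) < η := by exact_mod_cast hn'
    have h1n0 : (0:ℝ) < 1/(n:ℝ) := by positivity
    set T : ℕ → ℝ := fun i => (i:ℝ) / n with hT
    have hTmono : ∀ i j : ℕ, i ≤ j → T i ≤ T j := by
      intro i j h
      simp only [hT]
      rw [div_le_div_iff_of_pos_right hn0]
      exact_mod_cast h
    have hT0 : T 0 = 0 := by simp [hT]
    have hTn : T n = 1 := by
      simp only [hT]
      field_simp
    have hTmem : ∀ i : ℕ, i ≤ n → T i ∈ Set.Icc (0:ℝ) 1 := by
      intro i hi
      refine ⟨by positivity, ?_⟩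
      rw [← hTn]
      exact hTmono i n hi
    have hTstep : ∀ i : ℕ, T (i+1) - T i = 1/n := by
      intro i
      simp only [hT]
      push_cast
      ring
    -- choose the cover elements
    have hU : ∀ i : ℕ, ∃ U ∈ 𝒰, Metric.ball (p.extend (T i)) δ ⊆ U := by
      intro i
      apply hδ
      have : p.extend (T i) ∈ Set.range p.extend := ⟨T i, rfl⟩
      rwa [p.extend_range] at this
    choose U hU𝒰 hUb using hU
    -- choose path-connected neighborhoods
    have hV : ∀ i : ℕ, ∃ V : Set X, IsPathConnected V ∧
        V ⊆ Metric.ball (p.extend (T i)) (δ/4) ∧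
        ∃ e > 0, Metric.ball (p.extend (T i)) e ⊆ V := by
      intro i
      obtain ⟨V, ⟨hVn, hVpc⟩, hVsub⟩ := (path_connected_basis (p.extend (T i))).mem_iff.mp
        (Metric.ball_mem_nhds _ (by linarith : (0:ℝ) < δ/4))
      obtain ⟨e, he0, heb⟩ := Metric.mem_nhds_iff.mp hVn
      exact ⟨V, hVpc, hVsub, e, he0, heb⟩
    choose V hVpc hVsub e he0 heb using hV
    -- the final ε
    have hrne : (Finset.range (n+1)).Nonempty := ⟨0, Finset.mem_range.mpr (Nat.succ_pos n)⟩
    refine ⟨min (δ/4) ((Finset.range (n+1)).inf' hrne e), lt_min (by linarith)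
      (by rw [Finset.lt_inf'_iff]; intro i _; exact he0 i), ?_⟩
    set ε := min (δ/4) ((Finset.range (n+1)).inf' hrne e) with hε_def
    have hε0 : 0 < ε := lt_min (by linarith)
      (by rw [Finset.lt_inf'_iff]; intro i _; exact he0 i)
    have hεe : ∀ i : ℕ, i ≤ n → ε ≤ e i := fun i hi => (min_le_right _ _).trans
      (Finset.inf'_le _ (Finset.mem_range.mpr (Nat.lt_succ_of_le hi)))
    have hεδ : ε ≤ δ/4 := min_le_left _ _
    intro q hq
    have hqe : ∀ s : ℝ, s ∈ Set.Icc (0:ℝ) 1 → dist (p.extend s) (q.extend s) < ε := by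
      intro s hs
      rw [Path.extend_apply p hs, Path.extend_apply q hs]
      exact hq _
    -- connecting paths
    have hγ : ∀ i : ℕ, i ≤ n →
        ∃ γh : Path (p.extend (T i)) (q.extend (T i)), ∀ t, γh t ∈ V i := by
      intro i hi
      have h1 : p.extend (T i) ∈ V i := heb i (Metric.mem_ball_self (he0 i))
      have h2 : q.extend (T i) ∈ V i := by
        apply heb i
        rw [Metric.mem_ball, dist_comm]
        exact lt_of_lt_of_le (hqe _ (hTmem i hi)) (hεe i hi)
      exact (hVpc i).joinedIn _ h1 _ h2
    choose γp hγV using hγ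
    have hγball : ∀ i : ℕ, (hi : i ≤ n) → ∀ t, γp i hi t ∈ Metric.ball (p.extend (T i)) (δ/4) :=
      fun i hi t => hVsub i (hγV i hi t)
    -- points of truncations
    have hclamp : ∀ (w : Path y y) (a b : ℝ) (h : a ≤ b) (θ : unitInterval),
        ∃ c, a ≤ c ∧ c ≤ b ∧ (w.truncateOfLE h) θ = w.extend c := by
      intro w a b h θ
      exact ⟨min (max (θ:ℝ) a) b, le_min (le_max_right _ _) h, min_le_right _ _, rfl⟩
    -- distance estimates for segments
    have hPseg : ∀ k : ℕ, k + 1 ≤ n → ∀ z ∈ Set.range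
        (p.truncateOfLE (hTmono k (k+1) (Nat.le_succ k))),
        z ∈ Metric.ball (p.extend (T k)) (δ/4) := by
      rintro k hk1 z ⟨θ, rfl⟩
      obtain ⟨c, hc1, hc2, hc3⟩ := hclamp p (T k) (T (k+1)) (hTmono k (k+1) (Nat.le_succ k)) θ
      rw [hc3, Metric.mem_ball]
      apply hext
      · exact ⟨le_trans (hTmem k (Nat.le_of_succ_le hk1)).1 hc1,
          le_trans hc2 (hTmem (k+1) hk1).2⟩
      · exact hTmem k (Nat.le_of_succ_le hk1)
      · rw [abs_of_nonneg (by linarith)]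
        have := hTstep k
        linarith
    have hQseg : ∀ k : ℕ, k + 1 ≤ n → ∀ z ∈ Set.range
        (q.truncateOfLE (hTmono k (k+1) (Nat.le_succ k))),
        z ∈ Metric.ball (p.extend (T k)) δ := by
      rintro k hk1 z ⟨θ, rfl⟩
      obtain ⟨c, hc1, hc2, hc3⟩ := hclamp q (T k) (T (k+1)) (hTmono k (k+1) (Nat.le_succ k)) θ
      have hcI : c ∈ Set.Icc (0:ℝ) 1 := ⟨le_trans (hTmem k (Nat.le_of_succ_le hk1)).1 hc1,
        le_trans hc2 (hTmem (k+1) hk1).2⟩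
      rw [hc3, Metric.mem_ball]
      have h1 : dist (q.extend c) (p.extend c) < ε := by
        rw [dist_comm]; exact hqe c hcI
      have h2 : dist (p.extend c) (p.extend (T k)) < δ/4 := by
        apply hext _ _ hcI (hTmem k (Nat.le_of_succ_le hk1))
        rw [abs_of_nonneg (by linarith)]
        have := hTstep k
        linarith
      calc dist (q.extend c) (p.extend (T k)) ≤
          dist (q.extend c) (p.extend c) + dist (p.extend c) (p.extend (T k)) := dist_triangle _ _ _
        _ < ε + δ/4 := add_lt_add h1 h2
        _ ≤ δ := by linarith
    have hstep_dist : ∀ k : ℕ, k + 1 ≤ n →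
        dist (p.extend (T (k+1))) (p.extend (T k)) < δ/4 := by
      intro k hk1
      apply hext _ _ (hTmem (k+1) hk1) (hTmem k (Nat.le_of_succ_le hk1))
      have h3 := hTstep k
      rw [abs_of_nonneg (by linarith)]
      linarith
    -- arrows setup
    set e₁ : FundamentalGroupoid.mk (X := TopCat.of X) y ⟶
        FundamentalGroupoid.mk (p.extend (T 0)) :=
      eqToHom (by rw [hT0, p.extend_zero]) with he₁
    set e₂ : FundamentalGroupoid.mk (X := TopCat.of X) (q.extend (T 0)) ⟶
        FundamentalGroupoid.mk y := eqToHom (by rw [hT0, q.extend_zero]) with he₂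
    -- the induction
    have hmain : ∀ k : ℕ, ∀ hk : k ≤ n, bfa (x₀ := x₀) G
        (e₁ ≫ hcl (p.truncateOfLE (hTmono 0 k (Nat.zero_le k))) ≫ hcl (γp k hk) ≫
          Groupoid.inv (hcl (q.truncateOfLE (hTmono 0 k (Nat.zero_le k)))) ≫ e₂) := by
      intro k
      induction k with
      | zero =>
        intro hk
        have hP0 : p.truncateOfLE (hTmono 0 0 (Nat.zero_le 0)) =
            Path.refl (p.extend (T 0)) := trunc_self p _
        have hQ0 : q.truncateOfLE (hTmono 0 0 (Nat.zero_le 0)) =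
            Path.refl (q.extend (T 0)) := trunc_self q _
        have hy01 : y = p.extend (T 0) := by rw [hT0, p.extend_zero]
        have hy02 : y = q.extend (T 0) := by rw [hT0, q.extend_zero]
        set g0 : Path y y := (γp 0 hk).cast hy01 hy02 with hg0
        have hrange : Set.range g0 ⊆ U 0 := by
          intro z hz
          rw [hg0] at hz
          rw [show (⇑((γp 0 hk).cast hy01 hy02) : unitInterval → X)
            = ⇑(γp 0 hk) from Path.cast_coe _ _ _] at hz
          obtain ⟨t, rfl⟩ := hz
          exact hUb 0 (Metric.ball_subset_ball (by linarith) (hγball 0 hk t))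
        have hbf0 : bfa (x₀ := x₀) G (hcl g0) :=
          (loopInBF_iff_bfa G g0).mp (hloops (U 0) (hU𝒰 0) y g0 hrange)
        have heq : e₁ ≫ hcl (p.truncateOfLE (hTmono 0 0 (Nat.zero_le 0))) ≫ hcl (γp 0 hk) ≫
            Groupoid.inv (hcl (q.truncateOfLE (hTmono 0 0 (Nat.zero_le 0)))) ≫ e₂ =
            hcl (Y := X) g0 := by
          rw [hP0, hQ0, hg0, hcl_refl, hcl_refl, hcl_cast, he₁, he₂]
          simp [Groupoid.inv_eq_inv]
        rw [heq]
        exact hbf0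
      | succ k ih =>
        intro hk1
        have hk : k ≤ n := Nat.le_of_succ_le hk1
        set pseg := p.truncateOfLE (hTmono k (k+1) (Nat.le_succ k)) with hpseg
        set qseg := q.truncateOfLE (hTmono k (k+1) (Nat.le_succ k)) with hqseg
        set M : Path (p.extend (T k)) (p.extend (T k)) :=
          ((pseg.trans (γp (k+1) hk1)).trans qseg.symm).trans (γp k hk).symm with hM
        have hMrange : Set.range M ⊆ U k := by
          intro z hz
          apply hUb k
          rw [hM] at hz
          rw [Path.trans_range, Path.trans_range, Path.trans_range, Path.symm_range,
            Path.symm_range] at hz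
          rcases hz with ((hz | hz) | hz) | hz
          · exact Metric.ball_subset_ball (by linarith) (hPseg k hk1 z hz)
          · obtain ⟨t, rfl⟩ := hz
            rw [Metric.mem_ball]
            calc dist (γp (k+1) hk1 t) (p.extend (T k)) ≤
                dist (γp (k+1) hk1 t) (p.extend (T (k+1))) +
                  dist (p.extend (T (k+1))) (p.extend (T k)) := dist_triangle _ _ _
              _ < δ/4 + δ/4 := add_lt_add (hγball (k+1) hk1 t) (hstep_dist k hk1)
              _ ≤ δ := by linarith
          · exact hQseg k hk1 z hz
          · obtain ⟨t, rfl⟩ := hz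
            exact Metric.ball_subset_ball (by linarith) (hγball k hk t)
        have hbfM : bfa (x₀ := x₀) G (hcl M) :=
          (loopInBF_iff_bfa G M).mp (hloops (U k) (hU𝒰 k) _ M hMrange)
        have hconj := bfa_conj G hbfM
          (e₁ ≫ hcl (p.truncateOfLE (hTmono 0 k (Nat.zero_le k))))
        have hPsplit : hcl (Y := X) (p.truncateOfLE (hTmono 0 (k+1) (Nat.zero_le _))) =
            hcl (p.truncateOfLE (hTmono 0 k (Nat.zero_le k))) ≫ hcl pseg := by
          rw [hpseg]
          exact trunc_trans p (le_of_eq hT0.symm) (hTmono 0 k (Nat.zero_le k))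
            (hTmono k (k+1) (Nat.le_succ k)) (hTmem (k+1) hk1).2
        have hQsplit : hcl (Y := X) (q.truncateOfLE (hTmono 0 (k+1) (Nat.zero_le _))) =
            hcl (q.truncateOfLE (hTmono 0 k (Nat.zero_le k))) ≫ hcl qseg := by
          rw [hqseg]
          exact trunc_trans q (le_of_eq hT0.symm) (hTmono 0 k (Nat.zero_le k))
            (hTmono k (k+1) (Nat.le_succ k)) (hTmem (k+1) hk1).2
        have heq : e₁ ≫ hcl (p.truncateOfLE (hTmono 0 (k+1) (Nat.zero_le _))) ≫
            hcl (γp (k+1) hk1) ≫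
            Groupoid.inv (hcl (q.truncateOfLE (hTmono 0 (k+1) (Nat.zero_le _)))) ≫ e₂ =
            ((e₁ ≫ hcl (p.truncateOfLE (hTmono 0 k (Nat.zero_le k)))) ≫ hcl M ≫
              Groupoid.inv (e₁ ≫ hcl (p.truncateOfLE (hTmono 0 k (Nat.zero_le k))))) ≫
            (e₁ ≫ hcl (p.truncateOfLE (hTmono 0 k (Nat.zero_le k))) ≫ hcl (γp k hk) ≫
              Groupoid.inv (hcl (q.truncateOfLE (hTmono 0 k (Nat.zero_le k)))) ≫ e₂) := by
          rw [hPsplit, hQsplit, hM]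
          simp only [hcl_trans, hcl_symm]
          simp [Groupoid.inv_eq_inv]
        rw [heq]
        exact bfa_comp G hconj (ih hk)
    -- conclusion
    have hend := hmain n (le_refl n)
    have hyn1 : y = p.extend (T n) := by rw [hTn, p.extend_one]
    have hyn2 : y = q.extend (T n) := by rw [hTn, q.extend_one]
    set gn : Path y y := (γp n (le_refl n)).cast hyn1 hyn2 with hgn
    have hrangen : Set.range gn ⊆ U n := by
      intro z hz
      rw [hgn] at hz
      rw [show (⇑((γp n (le_refl n)).cast hyn1 hyn2) : unitInterval → X)
        = ⇑(γp n (le_refl n)) from Path.cast_coe _ _ _] at hz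
      obtain ⟨t, rfl⟩ := hz
      exact hUb n (Metric.ball_subset_ball (by linarith) (hγball n (le_refl n) t))
    have hbfn : bfa (x₀ := x₀) G (hcl gn) :=
      (loopInBF_iff_bfa G gn).mp (hloops (U n) (hU𝒰 n) y gn hrangen)
    have hPn : p.truncateOfLE (hTmono 0 n (Nat.zero_le n)) =
        p.cast (by rw [hT0, p.extend_zero]) (by rw [hTn, p.extend_one]) :=
      trunc_full p _ hT0 hTn
    have hQn : q.truncateOfLE (hTmono 0 n (Nat.zero_le n)) =
        q.cast (by rw [hT0, q.extend_zero]) (by rw [hTn, q.extend_one]) :=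
      trunc_full q _ hT0 hTn
    have hqdecomp : hcl (Y := X) q =
        Groupoid.inv (e₁ ≫ hcl (p.truncateOfLE (hTmono 0 n (Nat.zero_le n))) ≫
          hcl (γp n (le_refl n)) ≫
          Groupoid.inv (hcl (q.truncateOfLE (hTmono 0 n (Nat.zero_le n)))) ≫ e₂) ≫
        hcl p ≫ hcl gn := by
      rw [hPn, hQn, hgn, hcl_cast, hcl_cast, hcl_cast, he₁, he₂]
      simp [Groupoid.inv_eq_inv]
    rw [loopInBF_iff_bfa, hqdecomp]
    exact bfa_comp G (bfa_inv G hend) (bfa_comp G hp hbfn)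
  obtain ⟨ε, hε0, key⟩ := main
  refine ⟨(fun r : Path y y => (r : C(unitInterval, X))) ⁻¹' Metric.ball (p : C(unitInterval, X)) ε,
      ?_, ?_, ?_⟩
  · intro q hq
    refine key q fun t => ?_
    have := (ContinuousMap.dist_lt_iff hε0).mp (by simpa [Metric.mem_ball, dist_comm] using hq)
    simpa [dist_comm] using this t
  · exact Metric.isOpen_ball.preimage continuous_induced_dom
  · simp [Metric.mem_ball, hε0]
end

section
/- Let X be a metric space, locally path-connected, and G ⊴ π₁(X) a normal subgroup. If G is not open, then there exists a point y ∈ X and a sequence of loops (l_n) based at y with diam(l_n) → 0 such that [l_n] ∉ G for all n. -/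
open FundamentalGroup Filter

attribute [local instance] Path.Homotopic.setoid

noncomputable section
open CategoryTheory unitInterval Set Metric Topology

namespace SmallAux

/-- affine interpolation inside the unit interval -/
def aff (s t u : I) : I :=
  ⟨(1 - (u : ℝ)) * s + u * t, by
    constructor
    · nlinarith [u.2.1, u.2.2, s.2.1, s.2.2, t.2.1, t.2.2]
    · nlinarith [u.2.1, u.2.2, s.2.1, s.2.2, t.2.1, t.2.2]⟩

@[simp] lemma aff_coe (s t u : I) : (aff s t u : ℝ) = (1 - (u : ℝ)) * s + u * t := rfl

@[simp] lemma aff_zero (s t : I) : aff s t 0 = s := by ext; simp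
@[simp] lemma aff_one (s t : I) : aff s t 1 = t := by ext; simp
@[simp] lemma aff_same (s u : I) : aff s s u = s := by ext; simp [aff]; ring
@[simp] lemma aff_01 (u : I) : aff 0 1 u = u := by ext; simp

lemma continuous_aff (s t : I) : Continuous (aff s t) := by
  apply Continuous.subtype_mk; fun_prop

lemma continuous_aff2 : Continuous (fun x : (I × I) × I => aff x.1.1 x.1.2 x.2) := by
  apply Continuous.subtype_mk; fun_prop

lemma dist_aff_left (s t u : I) : dist (aff s t u) s ≤ dist t s := by
  rw [Subtype.dist_eq, Subtype.dist_eq, Real.dist_eq, Real.dist_eq]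
  have : (1 - (u:ℝ)) * s + u * t - s = u * (t - s) := by ring
  rw [aff_coe, this, abs_mul, abs_of_nonneg u.2.1]
  nlinarith [abs_nonneg ((t:ℝ) - s), u.2.2]

variable {X : Type} [TopologicalSpace X]

/-- subpath with prescribed endpoints -/
def subp {a b c d : X} (γ : Path a b) (s t : I) (hc : γ s = c) (hd : γ t = d) :
    Path c d where
  toFun u := γ (aff s t u)
  continuous_toFun := γ.continuous.comp (continuous_aff s t)
  source' := by simp [hc]
  target' := by simp [hd]

@[simp] lemma subp_apply {a b c d : X} (γ : Path a b) (s t : I) (hc : γ s = c)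
    (hd : γ t = d) (u : I) : subp γ s t hc hd u = γ (aff s t u) := rfl

/-- master lemma: two reparametrizations of the same path with matching endpoints
are homotopic (rel endpoints), via the linear homotopy. -/
lemma homotopic_reparam {a b c d : X} (γ : Path a b) {g₀ g₁ : I → I}
    (hg₀ : Continuous g₀) (hg₁ : Continuous g₁)
    (h0 : g₀ 0 = g₁ 0) (h1 : g₀ 1 = g₁ 1)
    (p₀ p₁ : Path c d) (hp₀ : ∀ u, p₀ u = γ (g₀ u)) (hp₁ : ∀ u, p₁ u = γ (g₁ u)) :
    p₀.Homotopic p₁ := by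
  have hc : Continuous fun x : I × I => ((1 - (x.1 : ℝ)) * (g₀ x.2 : ℝ) + (x.1 : ℝ) * (g₁ x.2 : ℝ)) := by fun_prop
  refine ⟨⟨⟨⟨fun x => γ (aff (g₀ x.2) (g₁ x.2) x.1), ?_⟩, ?_, ?_⟩, ?_⟩⟩
  · exact γ.continuous.comp (hc.subtype_mk _)
  · intro u; simp [hp₀ u]
  · intro u; simp [hp₁ u]
  · intro τ u hu
    simp only [mem_insert_iff, mem_singleton_iff] at hu
    rcases hu with rfl | rfl
    · simp only [ContinuousMap.coe_mk, Path.coe_toContinuousMap, hp₀, h0, aff_same]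
    · simp only [ContinuousMap.coe_mk, Path.coe_toContinuousMap, hp₀, h1, aff_same]

end SmallAux

namespace SmallAux

/-- projection onto the unit interval -/
def projI (r : ℝ) : I := Set.projIcc 0 1 zero_le_one r

lemma continuous_projI : Continuous projI := continuous_projIcc (h := zero_le_one)

@[simp] lemma projI_zero : projI 0 = 0 := by
  ext; rw [projI, Set.projIcc_of_le_left _ le_rfl]; rfl

@[simp] lemma projI_one : projI 1 = 1 := by
  ext; rw [projI, Set.projIcc_of_right_le _ le_rfl]; rfl

lemma subp_split {X : Type} [TopologicalSpace X] {a b c d e : X} (γ : Path a b) (s m t : I)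
    (hc : γ s = c) (hd : γ m = d) (he : γ t = e) :
    (subp γ s t hc he).Homotopic ((subp γ s m hc hd).trans (subp γ m t hd he)) := by
  apply homotopic_reparam γ (g₀ := aff s t)
    (g₁ := fun u => if (u : ℝ) ≤ 1 / 2 then aff s m (projI (2 * u)) else aff m t (projI (2 * u - 1)))
  · exact continuous_aff s t
  · apply Continuous.if_le
    · exact (continuous_aff s m).comp (continuous_projI.comp (by fun_prop))
    · exact (continuous_aff m t).comp (continuous_projI.comp (by fun_prop))
    · fun_prop
    · fun_prop
    · intro u hu
      have h1 : projI (2 * (u : ℝ)) = 1 := by rw [hu]; norm_num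
      have h2 : projI (2 * (u : ℝ) - 1) = 0 := by rw [hu]; norm_num
      rw [h1, h2, aff_one, aff_zero]
  · simp
  · have h1 : ((1 : I) : ℝ) = 1 := rfl
    simp only [h1]
    rw [if_neg (by norm_num)]
    norm_num
  · intro u; rfl
  · intro u
    rw [Path.trans_apply]
    split_ifs with h
    · have : projI (2 * (u : ℝ)) = ⟨2 * u, (mul_pos_mem_iff zero_lt_two).2 ⟨u.2.1, h⟩⟩ := by
        rw [projI, Set.projIcc_of_mem]
      rw [this]; rfl
    · have : projI (2 * (u : ℝ) - 1) =
          ⟨2 * u - 1, unitInterval.two_mul_sub_one_mem_iff.2 ⟨(not_le.1 h).le, u.2.2⟩⟩ := by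
        rw [projI, Set.projIcc_of_mem]
      rw [this]; rfl

lemma subp_zero_one {X : Type} [TopologicalSpace X] {a b : X} (γ : Path a b) :
    subp γ 0 1 γ.source γ.target = γ := by
  ext u; simp

end SmallAux

namespace SmallAux

variable {Y : Type} [TopologicalSpace Y]

/-- the homotopy class of a path, as a morphism in the fundamental groupoid -/
def cl {x y : Y} (p : Path x y) :
    FundamentalGroupoid.mk x ⟶ FundamentalGroupoid.mk y := ⟦p⟧

lemma cl_trans {x y z : Y} (p : Path x y) (q : Path y z) :
    cl (p.trans q) = cl p ≫ cl q := rfl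

lemma cl_symm {x y : Y} (p : Path x y) :
    cl p.symm = Groupoid.inv (cl p) := rfl

lemma cl_refl (x : Y) : cl (Path.refl x) = 𝟙 (FundamentalGroupoid.mk x) := rfl

lemma cl_eq_of_homotopic {x y : Y} {p q : Path x y} (h : p.Homotopic q) : cl p = cl q :=
  Quotient.sound h

lemma cl_cast {x y x' y' : Y} (γ : Path x y) (hx : x' = x) (hy : y' = y) :
    cl (γ.cast hx hy) =
      eqToHom (congrArg FundamentalGroupoid.mk hx) ≫ cl γ ≫
        eqToHom (congrArg FundamentalGroupoid.mk hy.symm) := by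
  subst hx; subst hy
  have : γ.cast rfl rfl = γ := by ext u; rw [Path.cast_coe]
  simp [this]

lemma exists_path_rep {x y : Y} (f : FundamentalGroupoid.mk x ⟶ FundamentalGroupoid.mk y) :
    ∃ p : Path x y, cl p = f :=
  Quotient.exists_rep f

/-- the element of the fundamental group given by a loop morphism -/
def grp {x : Y} (f : FundamentalGroupoid.mk x ⟶ FundamentalGroupoid.mk x) :
    FundamentalGroup Y x :=
  FundamentalGroup.fromArrow (X := TopCat.of Y) f

lemma grp_comp {x : Y} (f g : FundamentalGroupoid.mk x ⟶ FundamentalGroupoid.mk x) :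
    grp (f ≫ g) = grp g * grp f := rfl

lemma grp_inv {x : Y} (f : FundamentalGroupoid.mk x ⟶ FundamentalGroupoid.mk x) :
    grp (Groupoid.inv f) = (grp f)⁻¹ := rfl

lemma grp_id (x : Y) : grp (𝟙 (FundamentalGroupoid.mk x)) = 1 := rfl

end SmallAux

namespace SmallAux

variable {Y : Type} [TopologicalSpace Y] {x₀ : Y} (G : Subgroup (FundamentalGroup Y x₀))

/-- basepoint-free membership in `G`, stated for all conjugating paths -/
def bfQ {z : Y} (f : FundamentalGroupoid.mk z ⟶ FundamentalGroupoid.mk z) : Prop :=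
  ∀ ρ : Path x₀ z, grp (cl ρ ≫ f ≫ Groupoid.inv (cl ρ)) ∈ G

lemma bfQ_comp {z : Y} {f g : FundamentalGroupoid.mk z ⟶ FundamentalGroupoid.mk z}
    (h1 : bfQ G f) (h2 : bfQ G g) : bfQ G (f ≫ g) := by
  intro ρ
  have e : cl ρ ≫ (f ≫ g) ≫ Groupoid.inv (cl ρ) =
      (cl ρ ≫ f ≫ Groupoid.inv (cl ρ)) ≫ (cl ρ ≫ g ≫ Groupoid.inv (cl ρ)) := by
    simp [Groupoid.inv_eq_inv]
  rw [e, grp_comp]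
  exact mul_mem (h2 ρ) (h1 ρ)

lemma bfQ_inv {z : Y} {f : FundamentalGroupoid.mk z ⟶ FundamentalGroupoid.mk z}
    (h : bfQ G f) : bfQ G (Groupoid.inv f) := by
  intro ρ
  have e : cl ρ ≫ (Groupoid.inv f) ≫ Groupoid.inv (cl ρ) =
      Groupoid.inv (cl ρ ≫ f ≫ Groupoid.inv (cl ρ)) := by
    simp [Groupoid.inv_eq_inv]
  rw [e, grp_inv]
  exact inv_mem (h ρ)

lemma bfQ_id (z : Y) : bfQ G (𝟙 (FundamentalGroupoid.mk z)) := by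
  intro ρ
  have e : cl ρ ≫ 𝟙 (FundamentalGroupoid.mk z) ≫ Groupoid.inv (cl ρ) =
      𝟙 (FundamentalGroupoid.mk x₀) := by simp [Groupoid.inv_eq_inv]
  rw [e, grp_id]
  exact one_mem G

lemma bfQ_conj {z z' : Y} (sg : FundamentalGroupoid.mk z' ⟶ FundamentalGroupoid.mk z)
    {f : FundamentalGroupoid.mk z ⟶ FundamentalGroupoid.mk z}
    (h : bfQ G f) : bfQ G (sg ≫ f ≫ Groupoid.inv sg) := by
  intro ρ
  obtain ⟨s, hs⟩ := exists_path_rep (cl ρ ≫ sg)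
  have e : cl ρ ≫ (sg ≫ f ≫ Groupoid.inv sg) ≫ Groupoid.inv (cl ρ) =
      cl s ≫ f ≫ Groupoid.inv (cl s) := by
    rw [hs]; simp [Groupoid.inv_eq_inv]
  rw [e]
  exact h s

lemma bfQ_of_exists [G.Normal] {z : Y}
    {f : FundamentalGroupoid.mk z ⟶ FundamentalGroupoid.mk z}
    (h : ∃ ρ₀ : Path x₀ z, grp (cl ρ₀ ≫ f ≫ Groupoid.inv (cl ρ₀)) ∈ G) : bfQ G f := by
  obtain ⟨ρ₀, h0⟩ := h
  intro ρ
  have e : cl ρ ≫ f ≫ Groupoid.inv (cl ρ) =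
      (cl ρ ≫ Groupoid.inv (cl ρ₀)) ≫ (cl ρ₀ ≫ f ≫ Groupoid.inv (cl ρ₀)) ≫
        Groupoid.inv (cl ρ ≫ Groupoid.inv (cl ρ₀)) := by
    simp [Groupoid.inv_eq_inv]
  rw [e, grp_comp, grp_comp, grp_inv]
  exact Subgroup.Normal.conj_mem' inferInstance _ h0 _

lemma loopInBF_iff_bfQ [PathConnectedSpace Y] [G.Normal] {z : Y} (p : Path z z) :
    loopInBF G p ↔ bfQ G (cl p) := by
  constructor
  · rintro ⟨ρ₀, h⟩
    apply bfQ_of_exists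
    refine ⟨ρ₀, ?_⟩
    have h' : grp ((cl ρ₀ ≫ cl p) ≫ Groupoid.inv (cl ρ₀)) ∈ G := h
    rwa [Category.assoc] at h'
  · intro h
    refine ⟨PathConnectedSpace.somePath x₀ z, ?_⟩
    have h' := h (PathConnectedSpace.somePath x₀ z)
    rw [← Category.assoc] at h'
    exact h'

lemma loopInBF_conj [PathConnectedSpace Y] [G.Normal] {z w : Y} (sg : Path w z) (L : Path z z) :
    loopInBF G ((sg.trans L).trans sg.symm) ↔ loopInBF G L := by
  rw [loopInBF_iff_bfQ, loopInBF_iff_bfQ, cl_trans, cl_trans, cl_symm]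
  constructor
  · intro h
    have h2 := bfQ_conj G (Groupoid.inv (cl sg)) h
    have e : Groupoid.inv (cl sg) ≫ ((cl sg ≫ cl L) ≫ Groupoid.inv (cl sg)) ≫
        Groupoid.inv (Groupoid.inv (cl sg)) = cl L := by
      simp [Groupoid.inv_eq_inv]
    rwa [e] at h2
  · intro h
    have h2 := bfQ_conj G (cl sg) h
    rwa [← Category.assoc] at h2

end SmallAux

namespace SmallAux

lemma diam_lt_of_forall_dist_le {Z : Type} [MetricSpace Z] {s : Set Z} {c : Z} {r ε : ℝ}
    (h : ∀ w ∈ s, dist w c ≤ r) (h3 : 2 * r < ε) (hε : 0 < ε) : Metric.diam s < ε := by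
  rcases Set.eq_empty_or_nonempty s with rfl | hs
  · simpa [Metric.diam_empty]
  have h0 : 0 ≤ r := le_trans dist_nonneg (h _ hs.choose_spec)
  refine lt_of_le_of_lt (Metric.diam_le_of_forall_dist_le (by linarith) ?_) h3
  intro a ha b hb
  have := h a ha; have := h b hb
  calc dist a b ≤ dist a c + dist c b := dist_triangle a c b
    _ ≤ r + r := by rw [dist_comm c b]; linarith
    _ = 2 * r := by ring

variable {Z : Type} [MetricSpace Z] [PathConnectedSpace Z] [LocallyPathConnectedSpace Z]
variable {x₀ : Z} (G : Subgroup (FundamentalGroup Z x₀)) [G.Normal]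

lemma exists_pc_nhds (x : Z) {r : ℝ} (hr : 0 < r) :
    ∃ V : Set Z, V ∈ 𝓝 x ∧ IsPathConnected V ∧ V ⊆ Metric.ball x r := by
  obtain ⟨V, ⟨hV1, hV2⟩, hV3⟩ := (path_connected_basis x).mem_iff.mp (Metric.ball_mem_nhds x hr)
  exact ⟨V, hV1, hV2, hV3⟩

lemma isOpen_loopInBF_of_small
    (hsmall : ∀ y : Z, ∃ ε > 0, ∀ L : Path y y, Metric.diam (Set.range L) < ε → loopInBF G L)
    (y : Z) : IsOpen {p : Path y y | loopInBF G p} := by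
  choose ε hε0 hε using hsmall
  rw [isOpen_iff_mem_nhds]
  intro p hp
  simp only [Set.mem_setOf_eq] at hp
  have hKc : IsCompact (Set.range p) := isCompact_range p.continuous
  have hyK : y ∈ Set.range p := ⟨0, p.source⟩
  -- first cover
  have hV : ∀ x : Z, ∃ V : Set Z, V ∈ 𝓝 x ∧ IsPathConnected V ∧ V ⊆ Metric.ball x (ε x / 8) :=
    fun x => exists_pc_nhds x (by linarith [hε0 x])
  choose V hVn hVpc hVb using hV
  have hVmem : ∀ x, x ∈ V x := fun x => mem_of_mem_nhds (hVn x)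
  obtain ⟨F, hF⟩ := hKc.elim_finite_subcover (fun x => interior (V x)) (fun _ => isOpen_interior)
    (fun z _ => Set.mem_iUnion.2 ⟨z, mem_interior_iff_mem_nhds.2 (hVn z)⟩)
  have hFne : F.Nonempty := by
    obtain ⟨x, hx, _⟩ := Set.mem_iUnion₂.1 (hF hyK)
    exact ⟨x, hx⟩
  set ε₀ : ℝ := (F.inf' hFne ε) / 4 with hε₀def
  have hε₀pos : 0 < ε₀ := by
    have h1 : 0 < F.inf' hFne ε := (Finset.lt_inf'_iff _).2 (fun b _ => hε0 b)
    rw [hε₀def]; linarith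
  have hε₀le : ∀ x ∈ F, ε₀ ≤ ε x / 4 := by
    intro x hx
    have := Finset.inf'_le ε hx
    rw [hε₀def]; linarith
  obtain ⟨δ₁, hδ₁pos, hδ₁⟩ := lebesgue_number_lemma_of_metric hKc
    (c := fun x : F => interior (V x)) (fun _ => isOpen_interior)
    (fun z hz => by
      obtain ⟨x, hxF, hx⟩ := Set.mem_iUnion₂.1 (hF hz)
      exact Set.mem_iUnion.2 ⟨⟨x, hxF⟩, hx⟩)
  -- KEY 1 : small loops based on the range of p are in G (basepoint-free)
  have key1 : ∀ z ∈ Set.range p, ∀ L : Path z z, Metric.diam (Set.range L) < ε₀ →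
      loopInBF G L := by
    intro z hz L hL
    obtain ⟨x, hx⟩ := hδ₁ z hz
    have hzV : z ∈ V x := interior_subset (hx (Metric.mem_ball_self hδ₁pos))
    obtain ⟨sg, hsg⟩ := (hVpc x).joinedIn (x : Z) (hVmem x) z hzV
    rw [← loopInBF_conj G sg L]
    apply hε x
    have hε₀x : ε₀ ≤ ε (x : Z) / 4 := hε₀le _ x.2
    have hLb : Bornology.IsBounded (Set.range L) := (isCompact_range L.continuous).isBounded
    have hzL : z ∈ Set.range L := ⟨0, L.source⟩
    apply diam_lt_of_forall_dist_le (c := (x : Z)) (r := 3 * ε (x : Z) / 8)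
    · intro w hw
      rw [Path.trans_range, Path.symm_range, Path.trans_range] at hw
      have hsgb : ∀ u : I, dist (sg u) (x : Z) ≤ 3 * ε (x : Z) / 8 := by
        intro u
        have h1 := Metric.mem_ball.1 (hVb x (hsg u))
        linarith [hε0 (x : Z)]
      rcases hw with (hw | hw) | hw
      · obtain ⟨u, rfl⟩ := hw; exact hsgb u
      · have h2 : dist w z ≤ Metric.diam (Set.range L) :=
          Metric.dist_le_diam_of_mem hLb hw hzL
        have h3 : dist z (x : Z) < ε (x : Z) / 8 := Metric.mem_ball.1 (hVb x hzV)
        calc dist w (x : Z) ≤ dist w z + dist z (x : Z) := dist_triangle _ _ _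
          _ ≤ 3 * ε (x : Z) / 8 := by linarith
      · obtain ⟨u, rfl⟩ := hw; exact hsgb u
    · linarith [hε0 (x : Z)]
    · exact hε0 (x : Z)
  -- second cover, for connecting paths
  have hW : ∀ x : Z, ∃ W : Set Z, W ∈ 𝓝 x ∧ IsPathConnected W ∧ W ⊆ Metric.ball x (ε₀ / 8) :=
    fun x => exists_pc_nhds x (by linarith)
  choose W hWn hWpc hWb using hW
  obtain ⟨δ₂, hδ₂pos, hδ₂⟩ := lebesgue_number_lemma_of_metric hKc
    (c := fun x : Z => interior (W x)) (fun _ => isOpen_interior)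
    (fun z _ => Set.mem_iUnion.2 ⟨z, mem_interior_iff_mem_nhds.2 (hWn z)⟩)
  have key2 : ∀ z ∈ Set.range p, ∀ a b : Z, dist a z < δ₂ → dist b z < δ₂ →
      ∃ α : Path a b, ∀ u : I, dist (α u) z < ε₀ / 4 := by
    intro z hz a b ha hb
    obtain ⟨x, hx⟩ := hδ₂ z hz
    have hsub : Metric.ball z δ₂ ⊆ W x := fun w hw => interior_subset (hx hw)
    have hzW : z ∈ W x := hsub (Metric.mem_ball_self hδ₂pos)
    obtain ⟨α, hα⟩ := (hWpc x).joinedIn a (hsub (Metric.mem_ball.2 ha))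
      b (hsub (Metric.mem_ball.2 hb))
    refine ⟨α, fun u => ?_⟩
    have h1 := Metric.mem_ball.1 (hWb x (hα u))
    have h2 := Metric.mem_ball.1 (hWb x hzW)
    calc dist (α u) z ≤ dist (α u) x + dist x z := dist_triangle _ _ _
      _ < ε₀ / 4 := by rw [dist_comm x z]; linarith
  -- modulus of continuity
  set θ : ℝ := min (δ₂ / 2) (ε₀ / 16) with hθdef
  have hθpos : 0 < θ := lt_min (by linarith) (by linarith)
  have hθ1 : θ ≤ δ₂ / 2 := min_le_left _ _
  have hθ2 : θ ≤ ε₀ / 16 := min_le_right _ _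
  obtain ⟨δt, hδtpos, hδt⟩ := Metric.uniformContinuous_iff.1
    (CompactSpace.uniformContinuous_of_continuous p.continuous) θ hθpos
  obtain ⟨n, hn⟩ := exists_nat_one_div_lt (K := ℝ) hδtpos
  set k : ℕ := n + 1 with hkdef
  have hkpos : (0:ℝ) < (k : ℝ) := by rw [hkdef]; positivity
  have hk : (1:ℝ) / (k : ℝ) < δt := by rw [hkdef]; push_cast; exact hn
  set t : ℕ → I := fun i => projI (i / k) with htdef
  have ht0 : t 0 = 0 := by rw [htdef]; norm_num
  have htk : t k = 1 := by
    rw [htdef]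
    show projI ((k : ℝ) / (k : ℝ)) = 1
    rw [div_self (ne_of_gt hkpos), projI_one]
  have htt : ∀ i : ℕ, dist (t (i+1)) (t i) < δt := by
    intro i
    have hl := (LipschitzWith.projIcc (zero_le_one (α := ℝ))).dist_le_mul
      ((↑(i+1) : ℝ) / (k : ℝ)) ((i : ℝ) / (k : ℝ))
    have hd : dist ((↑(i+1) : ℝ) / (k : ℝ)) ((i:ℝ) / (k : ℝ)) = 1 / (k : ℝ) := by
      have he : (↑(i+1) : ℝ) / (k : ℝ) - (i:ℝ) / (k : ℝ) = 1 / (k : ℝ) := by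
        push_cast; ring
      rw [Real.dist_eq, he, abs_of_nonneg (by positivity)]
    rw [hd] at hl
    exact lt_of_le_of_lt hl (by rw [NNReal.coe_one, one_mul]; exact hk)
  -- the neighborhood
  have hNopen : IsOpen {r : Path y y | dist (r : C(I, Z)) (p : C(I, Z)) < θ} := by
    have hcont : Continuous (fun r : Path y y => (r : C(I, Z))) := continuous_induced_dom
    exact hcont.isOpen_preimage _ Metric.isOpen_ball
  apply Filter.mem_of_superset (hNopen.mem_nhds (by simp [hθpos]))
  intro q hq
  simp only [Set.mem_setOf_eq] at hq ⊢
  have hqd : ∀ u : I, dist (q u) (p u) < θ :=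
    fun u => lt_of_le_of_lt (ContinuousMap.dist_apply_le_dist u) hq
  -- connecting paths
  have hαe : ∀ i : ℕ, ∃ α : Path (p (t i)) (q (t i)),
      ∀ u : I, dist (α u) (p (t i)) < ε₀ / 4 := by
    intro i
    apply key2 (p (t i)) ⟨t i, rfl⟩
    · rw [dist_self]; exact hδ₂pos
    · have := hqd (t i); linarith
  choose α hαb using hαe
  -- pointwise bounds on the subdivided pieces
  have hPpb : ∀ (i : ℕ) (u : I), dist (p (aff (t i) (t (i+1)) u)) (p (t i)) < θ :=
    fun i u => hδt (lt_of_le_of_lt (dist_aff_left (t i) (t (i+1)) u) (htt i))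
  have hQqb : ∀ (i : ℕ) (u : I), dist (q (aff (t i) (t (i+1)) u)) (p (t i)) < 2 * θ := by
    intro i u
    calc dist (q (aff (t i) (t (i+1)) u)) (p (t i)) ≤
        dist (q (aff (t i) (t (i+1)) u)) (p (aff (t i) (t (i+1)) u)) +
          dist (p (aff (t i) (t (i+1)) u)) (p (t i)) := dist_triangle _ _ _
      _ < 2 * θ := by linarith [hqd (aff (t i) (t (i+1)) u), hPpb i u]
  have hend : ∀ u : I, dist (aff (t k) 1 u) (t k) < δt := by
    intro u
    refine lt_of_le_of_lt (dist_aff_left (t k) 1 u) ?_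
    rw [htk, dist_self]; exact hδtpos
  have hSkb : ∀ u : I, dist (p (aff (t k) 1 u)) (p (t k)) < θ := fun u => hδt (hend u)
  have hRkb : ∀ u : I, dist (q (aff (t k) 1 u)) (p (t k)) < 2 * θ := by
    intro u
    calc dist (q (aff (t k) 1 u)) (p (t k)) ≤
        dist (q (aff (t k) 1 u)) (p (aff (t k) 1 u)) +
          dist (p (aff (t k) 1 u)) (p (t k)) := dist_triangle _ _ _
      _ < 2 * θ := by linarith [hqd (aff (t k) 1 u), hSkb u]
  -- the loops at the subdivision points
  set B : ∀ i : ℕ, Path (p (t i)) (p (t i)) := fun i =>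
    ((α i).trans (subp q (t i) 1 rfl q.target)).trans (subp p (t i) 1 rfl p.target).symm
    with hBdef
  -- base case
  have hBk : loopInBF G (B k) := by
    apply key1 (p (t k)) ⟨t k, rfl⟩
    apply diam_lt_of_forall_dist_le (c := p (t k)) (r := ε₀ / 4) ?_ (by linarith) hε₀pos
    intro w hw
    simp only [hBdef] at hw
    rw [Path.trans_range, Path.symm_range, Path.trans_range] at hw
    rcases hw with (hw | hw) | hw
    · obtain ⟨u, rfl⟩ := hw; exact (hαb k u).le
    · obtain ⟨u, rfl⟩ := hw
      rw [subp_apply]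
      linarith [hRkb u]
    · obtain ⟨u, rfl⟩ := hw
      rw [subp_apply]
      linarith [hSkb u]
  -- inductive step
  have step : ∀ i : ℕ, loopInBF G (B (i+1)) → loopInBF G (B i) := by
    intro i hBi1
    have hL : loopInBF G ((((α i).trans (subp q (t i) (t (i+1)) rfl rfl)).trans
        (α (i+1)).symm).trans (subp p (t i) (t (i+1)) rfl rfl).symm) := by
      apply key1 (p (t i)) ⟨t i, rfl⟩
      apply diam_lt_of_forall_dist_le (c := p (t i)) (r := ε₀ / 4 + θ) ?_ (by linarith) hε₀pos
      intro w hw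
      rw [Path.trans_range, Path.symm_range, Path.trans_range, Path.symm_range,
        Path.trans_range] at hw
      rcases hw with ((hw | hw) | hw) | hw
      · obtain ⟨u, rfl⟩ := hw; linarith [hαb i u]
      · obtain ⟨u, rfl⟩ := hw; rw [subp_apply]; linarith [hQqb i u]
      · obtain ⟨u, rfl⟩ := hw
        have h1 := hαb (i+1) u
        have h2 := hPpb i 1
        rw [aff_one] at h2
        calc dist ((α (i+1)) u) (p (t i)) ≤
            dist ((α (i+1)) u) (p (t (i+1))) + dist (p (t (i+1))) (p (t i)) :=
              dist_triangle _ _ _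
          _ ≤ ε₀ / 4 + θ := by linarith
      · obtain ⟨u, rfl⟩ := hw; rw [subp_apply]; linarith [hPpb i u]
    -- split the tails
    have hsplR : cl (subp q (t i) 1 rfl q.target) =
        cl (subp q (t i) (t (i+1)) rfl rfl) ≫ cl (subp q (t (i+1)) 1 rfl q.target) := by
      rw [← cl_trans]
      exact cl_eq_of_homotopic (subp_split q (t i) (t (i+1)) 1 rfl rfl q.target)
    have hsplS : cl (subp p (t i) 1 rfl p.target) =
        cl (subp p (t i) (t (i+1)) rfl rfl) ≫ cl (subp p (t (i+1)) 1 rfl p.target) := by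
      rw [← cl_trans]
      exact cl_eq_of_homotopic (subp_split p (t i) (t (i+1)) 1 rfl rfl p.target)
    rw [loopInBF_iff_bfQ] at hL hBi1 ⊢
    have hconj := bfQ_conj G (cl (subp p (t i) (t (i+1)) rfl rfl)) hBi1
    have hcomp := bfQ_comp G hL hconj
    have e : cl (B i) =
        cl ((((α i).trans (subp q (t i) (t (i+1)) rfl rfl)).trans
          (α (i+1)).symm).trans (subp p (t i) (t (i+1)) rfl rfl).symm) ≫
        (cl (subp p (t i) (t (i+1)) rfl rfl) ≫ cl (B (i+1)) ≫
          Groupoid.inv (cl (subp p (t i) (t (i+1)) rfl rfl))) := by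
      simp only [hBdef, cl_trans, cl_symm]
      rw [hsplR, hsplS]
      simp [Groupoid.inv_eq_inv]
    rw [e]
    exact hcomp
  -- downward induction
  have main : ∀ n : ℕ, loopInBF G (B (k - n)) := by
    intro m
    induction m with
    | zero => simpa using hBk
    | succ m ih =>
      rcases le_or_gt k m with hkm | hkm
      · have h1 : k - (m + 1) = k - m := by omega
        rw [h1]; exact ih
      · have h1 : k - m = (k - (m+1)) + 1 := by omega
        rw [h1] at ih
        exact step _ ih
  have hB0 : loopInBF G (B 0) := by
    have := main k
    rwa [Nat.sub_self] at this
  -- transport to the basepoint y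
  have h0p : p (t 0) = y := by rw [ht0]; exact p.source
  have h0q : q (t 0) = y := by rw [ht0]; exact q.source
  have hR0 : subp q (t 0) 1 rfl q.target = q.cast h0q rfl := by
    ext u
    show q (aff (t 0) 1 u) = (q.cast h0q rfl) u
    have ha : aff (t 0) 1 u = u := by rw [ht0, aff_01]
    rw [ha]
    exact (congrFun (Path.cast_coe q h0q rfl) u).symm
  have hS0 : subp p (t 0) 1 rfl p.target = p.cast h0p rfl := by
    ext u
    show p (aff (t 0) 1 u) = (p.cast h0p rfl) u
    have ha : aff (t 0) 1 u = u := by rw [ht0, aff_01]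
    rw [ha]
    exact (congrFun (Path.cast_coe p h0p rfl) u).symm
  have hclR0 : cl (subp q (t 0) 1 rfl q.target) =
      eqToHom (congrArg FundamentalGroupoid.mk h0q) ≫ cl q := by
    rw [hR0, cl_cast]; simp
  have hclS0 : cl (subp p (t 0) 1 rfl p.target) =
      eqToHom (congrArg FundamentalGroupoid.mk h0p) ≫ cl p := by
    rw [hS0, cl_cast]; simp
  have hc' : loopInBF G ((α 0).cast h0p.symm h0q.symm) := by
    apply key1 y hyK
    apply diam_lt_of_forall_dist_le (c := y) (r := ε₀ / 4) ?_ (by linarith) hε₀pos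
    intro w hw
    obtain ⟨u, rfl⟩ := hw
    have hcc : ((α 0).cast h0p.symm h0q.symm) u = (α 0) u :=
      congrFun (Path.cast_coe (α 0) h0p.symm h0q.symm) u
    rw [hcc]
    have h2 : dist (p (t 0)) y = 0 := by rw [h0p, dist_self]
    linarith [hαb 0 u, dist_triangle ((α 0) u) (p (t 0)) y]
  rw [loopInBF_iff_bfQ] at hc' hp hB0 ⊢
  have hconj := bfQ_conj G (eqToHom (congrArg FundamentalGroupoid.mk h0p).symm) hB0
  have efin : cl q =
      Groupoid.inv (cl ((α 0).cast h0p.symm h0q.symm)) ≫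
        ((eqToHom (congrArg FundamentalGroupoid.mk h0p).symm ≫ cl (B 0) ≫
          Groupoid.inv (eqToHom (congrArg FundamentalGroupoid.mk h0p).symm)) ≫ cl p) := by
    simp only [hBdef, cl_trans, cl_symm, cl_cast, hclR0, hclS0]
    simp [Groupoid.inv_eq_inv]
  rw [efin]
  exact bfQ_comp G (bfQ_inv G hc') (bfQ_comp G hconj hp)

end SmallAux

/-- If `X` is a locally path-connected metric space and `G ⊴ π₁(X)` is a normal subgroup
that is not open, then there is a point `y ∈ X` and a sequence of loops `(l n)` based at
`y` with `diam (l n) → 0` such that `[l n] ∉ G` for all `n`. -/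
theorem exists_small_loops_of_not_open {X : Type} [MetricSpace X] [PathConnectedSpace X]
    [LocallyPathConnectedSpace X] (x₀ : X) (G : Subgroup (FundamentalGroup X x₀)) [G.Normal]
    (hnot : ¬ ∀ y : X, IsOpen {p : Path y y | loopInBF G p}) :
    ∃ (y : X) (l : ℕ → Path y y),
      Tendsto (fun n => Metric.diam (Set.range (l n))) atTop (nhds 0) ∧
      ∀ n, ¬ loopInBF G (l n) := by
  by_contra hcon
  push_neg at hcon
  have hsmall : ∀ y : X, ∃ ε > 0, ∀ L : Path y y,
      Metric.diam (Set.range L) < ε → loopInBF G L := by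
    intro y
    by_contra hsm
    push_neg at hsm
    have hseq : ∀ n : ℕ, ∃ L : Path y y,
        Metric.diam (Set.range L) < (1 : ℝ) / (n + 1) ∧ ¬ loopInBF G L := by
      intro n
      obtain ⟨L, h1, h2⟩ := hsm ((1 : ℝ) / (n + 1)) (by positivity)
      exact ⟨L, h1, h2⟩
    choose l hl1 hl2 using hseq
    have htend : Tendsto (fun n => Metric.diam (Set.range (l n))) atTop (nhds 0) := by
      apply squeeze_zero (fun n => Metric.diam_nonneg) (fun n => (hl1 n).le)
      exact tendsto_one_div_add_atTop_nhds_zero_nat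
    obtain ⟨m, hm⟩ := hcon y l htend
    exact hl2 m hm
  exact hnot (SmallAux.isOpen_loopInBF_of_small G hsmall)
end
end

section
/- Suppose ≈ is an equivalence relation on the Cantor space {0,1}^ω with the Baire property as a subset of {0,1}^ω × {0,1}^ω, such that whenever α and β differ in exactly one coordinate, α ≈ β fails. Then ≈ has exactly 2^{ℵ₀} equivalence classes. -/
open Topology Set

namespace PawAux

abbrev X := ℕ → Bool

/-- Cylinder determined by the first `n` coordinates of `a`. -/
def Cyl (p : ℕ × X) : Set X := {x | ∀ i < p.1, x i = p.2 i}

lemma self_mem_Cyl (p : ℕ × X) : p.2 ∈ Cyl p := fun _ _ => rfl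

lemma Cyl_nonempty (p : ℕ × X) : (Cyl p).Nonempty := ⟨p.2, self_mem_Cyl p⟩

lemma isOpen_Cyl (p : ℕ × X) : IsOpen (Cyl p) := by
  have : Cyl p = ⋂ i ∈ Finset.range p.1, {x : X | x i = p.2 i} := by
    ext x; simp [Cyl]
  rw [this]
  refine isOpen_biInter_finset fun i _ => ?_
  have h : ({x : X | x i = p.2 i}) = (fun x : X => x i) ⁻¹' {p.2 i} := rfl
  rw [h]
  exact IsOpen.preimage (continuous_apply i) (isOpen_discrete _)

lemma Cyl_mono {p q : ℕ × X} (h1 : q.1 ≤ p.1) (h2 : ∀ i < q.1, p.2 i = q.2 i) :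
    Cyl p ⊆ Cyl q := fun x hx i hi => (hx i (lt_of_lt_of_le hi h1)).trans (h2 i hi)

/-- `p` refines `q`. -/
def Ref (p q : ℕ × X) : Prop := q.1 ≤ p.1 ∧ Cyl p ⊆ Cyl q

lemma Ref.refl (p : ℕ × X) : Ref p p := ⟨le_rfl, subset_rfl⟩

lemma Ref.trans {p q s : ℕ × X} (h1 : Ref p q) (h2 : Ref q s) : Ref p s :=
  ⟨h2.1.trans h1.1, h1.2.trans h2.2⟩

/-- cylinders form a neighborhood basis -/
lemma exists_cyl_subset {U : Set X} (hU : IsOpen U) {x : X} (hx : x ∈ U) :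
    ∃ m : ℕ, Cyl (m, x) ⊆ U := by
  have h := hU.mem_nhds hx
  rw [nhds_pi, Filter.mem_pi] at h
  obtain ⟨I, hI, V, hV, hVU⟩ := h
  obtain ⟨m, hm⟩ := hI.bddAbove
  refine ⟨m + 1, fun y hy => hVU fun i hi => ?_⟩
  have hix : y i = x i := hy i (Nat.lt_succ_of_le (hm hi))
  rw [hix]
  exact mem_of_mem_nhds (hV i)

lemma exists_cyl_box_subset {U : Set (X × X)} (hU : IsOpen U) {p : X × X} (hp : p ∈ U) :
    ∃ m : ℕ, Cyl (m, p.1) ×ˢ Cyl (m, p.2) ⊆ U := by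
  rw [isOpen_prod_iff] at hU
  obtain ⟨u, v, hu, hv, hpu, hpv, huv⟩ := hU p.1 p.2 hp
  obtain ⟨m1, hm1⟩ := exists_cyl_subset hu hpu
  obtain ⟨m2, hm2⟩ := exists_cyl_subset hv hpv
  refine ⟨max m1 m2, fun q hq => huv ⟨hm1 ?_, hm2 ?_⟩⟩
  · exact fun i hi => hq.1 i (lt_of_lt_of_le hi (le_max_left _ _))
  · exact fun i hi => hq.2 i (lt_of_lt_of_le hi (le_max_right _ _))

/-- extension of a pair of cylinders into a dense open set -/
lemma ext_pair {D : Set (X × X)} (hDo : IsOpen D) (hDd : Dense D) (p q : ℕ × X) :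
    ∃ p' q' : ℕ × X, Ref p' p ∧ Ref q' q ∧ Cyl p' ×ˢ Cyl q' ⊆ D := by
  have hbox : IsOpen (Cyl p ×ˢ Cyl q) := (isOpen_Cyl p).prod (isOpen_Cyl q)
  have hne : (Cyl p ×ˢ Cyl q ∩ D).Nonempty :=
    hDd.inter_open_nonempty _ hbox ⟨(p.2, q.2), ⟨self_mem_Cyl p, self_mem_Cyl q⟩⟩
  obtain ⟨z, ⟨hz1, hz2⟩, hzD⟩ := hne
  obtain ⟨m, hm⟩ := exists_cyl_box_subset hDo hzD
  refine ⟨(max m p.1, z.1), (max m q.1, z.2), ⟨le_max_right _ _, ?_⟩, ⟨le_max_right _ _, ?_⟩, ?_⟩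
  · exact fun x hx i hi => (hx i (lt_of_lt_of_le hi (le_max_right _ _))).trans (hz1 i hi)
  · exact fun x hx i hi => (hx i (lt_of_lt_of_le hi (le_max_right _ _))).trans (hz2 i hi)
  · refine fun w hw => hm ⟨?_, ?_⟩
    · exact fun i hi => hw.1 i (lt_of_lt_of_le hi (le_max_left _ _))
    · exact fun i hi => hw.2 i (lt_of_lt_of_le hi (le_max_left _ _))

/-- simultaneous extension over a list of pairs of indices -/
lemma ext_multi {D : Set (X × X)} (hDo : IsOpen D) (hDd : Dense D) {ι : Type}
    [DecidableEq ι] (L : List (ι × ι)) (hL : ∀ c ∈ L, c.1 ≠ c.2) (g : ι → ℕ × X) :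
    ∃ g' : ι → ℕ × X, (∀ i, Ref (g' i) (g i)) ∧
      ∀ c ∈ L, Cyl (g' c.1) ×ˢ Cyl (g' c.2) ⊆ D := by
  induction L generalizing g with
  | nil => exact ⟨g, fun i => Ref.refl _, by simp⟩
  | cons c L ih =>
    obtain ⟨g1, hg1, hg1D⟩ := ih (fun d hd => hL d (List.mem_cons_of_mem _ hd)) g
    have hne : c.1 ≠ c.2 := hL c (List.mem_cons_self)
    obtain ⟨p', q', hp', hq', hbox⟩ := ext_pair hDo hDd (g1 c.1) (g1 c.2)
    refine ⟨Function.update (Function.update g1 c.1 p') c.2 q', fun i => ?_, ?_⟩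
    · rcases eq_or_ne i c.2 with h2 | h2
      · subst h2; rw [Function.update_self]; exact hq'.trans (hg1 _)
      · rw [Function.update_of_ne h2]
        rcases eq_or_ne i c.1 with h1 | h1
        · subst h1; rw [Function.update_self]; exact hp'.trans (hg1 _)
        · rw [Function.update_of_ne h1]; exact hg1 i
    · intro d hd
      have key : ∀ i, Cyl ((Function.update (Function.update g1 c.1 p') c.2 q') i) ⊆
          Cyl (g1 i) := by
        intro i
        rcases eq_or_ne i c.2 with h2 | h2
        · subst h2; rw [Function.update_self]; exact hq'.2
        · rw [Function.update_of_ne h2]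
          rcases eq_or_ne i c.1 with h1 | h1
          · subst h1; rw [Function.update_self]; exact hp'.2
          · rw [Function.update_of_ne h1]
      rcases List.mem_cons.1 hd with rfl | hd'
      · rw [Function.update_of_ne hne, Function.update_self, Function.update_self]
        exact hbox
      · exact (Set.prod_mono (key d.1) (key d.2)).trans (hg1D d hd')

def Node (k : ℕ) := Fin k → Bool

instance (k : ℕ) : DecidableEq (Node k) := by unfold Node; infer_instance
instance (k : ℕ) : Fintype (Node k) := by unfold Node; infer_instance

def initN {k : ℕ} (s : Node (k + 1)) : Node k := fun i => s i.castSucc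

def restrN (x : X) (k : ℕ) : Node k := fun i => x i

/-- properties of the level-`(k+1)` refinement -/
def Q (D : ℕ → Set (X × X)) (k : ℕ) (g : Node k → ℕ × X) (g' : Node (k + 1) → ℕ × X) : Prop :=
  (∀ s : Node (k + 1), k + 1 ≤ (g' s).1 ∧ Ref (g' s) (g (initN s))) ∧
    ∀ s t : Node (k + 1), s ≠ t → Cyl (g' s) ×ˢ Cyl (g' t) ⊆ ⋂ m ∈ Finset.range (k + 1), D m

lemma step (D : ℕ → Set (X × X)) (hDo : ∀ n, IsOpen (D n)) (hDd : ∀ n, Dense (D n))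
    (k : ℕ) (g : Node k → ℕ × X) : ∃ g' : Node (k + 1) → ℕ × X, Q D k g g' := by
  set D' : Set (X × X) := ⋂ m ∈ Finset.range (k + 1), D m with hD'
  have hD'o : IsOpen D' := isOpen_biInter_finset fun m _ => hDo m
  have hD'd : Dense D' := by
    have : (⋂ n, D n) ⊆ D' := by
      intro x hx; simp only [hD', mem_iInter]; intro m _; exact mem_iInter.1 hx m
    exact Dense.mono this (dense_iInter_of_isOpen hDo hDd)
  -- first bump each node
  set g0 : Node (k + 1) → ℕ × X := fun s => (max (k + 1) ((g (initN s)).1), (g (initN s)).2)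
    with hg0
  have hg0ref : ∀ s, Ref (g0 s) (g (initN s)) := fun s =>
    ⟨le_max_right _ _, Cyl_mono (le_max_right _ _) (fun _ _ => rfl)⟩
  set L : List (Node (k + 1) × Node (k + 1)) :=
    ((Finset.univ ×ˢ Finset.univ).filter (fun c => c.1 ≠ c.2)).toList with hLdef
  have hL : ∀ c ∈ L, c.1 ≠ c.2 := by
    intro c hc
    rw [hLdef, Finset.mem_toList, Finset.mem_filter] at hc
    exact hc.2
  obtain ⟨g', hg'ref, hg'D⟩ := ext_multi hD'o hD'd L hL g0
  refine ⟨g', fun s => ⟨le_trans (le_max_left _ _) ((hg'ref s).1), (hg'ref s).trans (hg0ref s)⟩,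
    fun s t hst => ?_⟩
  rw [← hD']
  exact hg'D (s, t) (by
    rw [hLdef, Finset.mem_toList, Finset.mem_filter]
    exact ⟨Finset.mem_product.2 ⟨Finset.mem_univ _, Finset.mem_univ _⟩, hst⟩)

noncomputable def sig (D : ℕ → Set (X × X)) (hDo : ∀ n, IsOpen (D n))
    (hDd : ∀ n, Dense (D n)) : (k : ℕ) → Node k → ℕ × X
  | 0 => fun _ => (0, fun _ => false)
  | (k + 1) => Classical.choose (step D hDo hDd k (sig D hDo hDd k))

lemma sig_spec (D : ℕ → Set (X × X)) (hDo : ∀ n, IsOpen (D n)) (hDd : ∀ n, Dense (D n))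
    (k : ℕ) : Q D k (sig D hDo hDd k) (sig D hDo hDd (k + 1)) :=
  Classical.choose_spec (step D hDo hDd k (sig D hDo hDd k))

lemma sig_len (D : ℕ → Set (X × X)) (hDo : ∀ n, IsOpen (D n)) (hDd : ∀ n, Dense (D n))
    (k : ℕ) (s : Node (k + 1)) : k + 1 ≤ (sig D hDo hDd (k + 1) s).1 :=
  ((sig_spec D hDo hDd k).1 s).1

lemma initN_restrN (x : X) (k : ℕ) : initN (restrN x (k + 1)) = restrN x k := rfl

lemma sig_chain (D : ℕ → Set (X × X)) (hDo : ∀ n, IsOpen (D n)) (hDd : ∀ n, Dense (D n))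
    (x : X) {k m : ℕ} (h : k ≤ m) :
    Ref (sig D hDo hDd m (restrN x m)) (sig D hDo hDd k (restrN x k)) := by
  induction m with
  | zero => rw [Nat.le_zero.1 h]; exact Ref.refl _
  | succ m ih =>
    rcases Nat.lt_or_ge k (m + 1) with h' | h'
    · have step1 : Ref (sig D hDo hDd (m + 1) (restrN x (m + 1)))
          (sig D hDo hDd m (restrN x m)) := by
        have := ((sig_spec D hDo hDd m).1 (restrN x (m + 1))).2
        rwa [initN_restrN] at this
      exact step1.trans (ih (Nat.lt_succ_iff.1 h'))
    · have : k = m + 1 := le_antisymm h h'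
      rw [this]; exact Ref.refl _

noncomputable def fM (D : ℕ → Set (X × X)) (hDo : ∀ n, IsOpen (D n))
    (hDd : ∀ n, Dense (D n)) (x : X) : X :=
  fun i => (sig D hDo hDd (i + 1) (restrN x (i + 1))).2 i

lemma fM_mem (D : ℕ → Set (X × X)) (hDo : ∀ n, IsOpen (D n)) (hDd : ∀ n, Dense (D n))
    (x : X) (k : ℕ) : fM D hDo hDd x ∈ Cyl (sig D hDo hDd k (restrN x k)) := by
  intro i hi
  rcases le_total (i + 1) k with h | h
  · -- level k refines level i+1
    have hch := sig_chain D hDo hDd x h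
    have hc : (sig D hDo hDd k (restrN x k)).2 ∈ Cyl (sig D hDo hDd (i + 1) (restrN x (i + 1))) :=
      hch.2 (self_mem_Cyl _)
    have hlen : i < (sig D hDo hDd (i + 1) (restrN x (i + 1))).1 :=
      lt_of_lt_of_le (Nat.lt_succ_self i) (sig_len D hDo hDd i _)
    exact (hc i hlen).symm
  · -- level i+1 refines level k
    have hch := sig_chain D hDo hDd x h
    have hc : (sig D hDo hDd (i + 1) (restrN x (i + 1))).2 ∈
        Cyl (sig D hDo hDd k (restrN x k)) := hch.2 (self_mem_Cyl _)
    exact hc i hi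

lemma fM_avoid (D : ℕ → Set (X × X)) (hDo : ∀ n, IsOpen (D n)) (hDd : ∀ n, Dense (D n))
    {x y : X} (hxy : x ≠ y) (m : ℕ) : (fM D hDo hDd x, fM D hDo hDd y) ∈ D m := by
  obtain ⟨n, hn⟩ := Function.ne_iff.1 hxy
  set k : ℕ := max m n with hk
  have hst : restrN x (k + 1) ≠ restrN y (k + 1) := by
    intro h
    exact hn (congrFun h ⟨n, Nat.lt_succ_of_le (le_max_right m n)⟩)
  have hbox := (sig_spec D hDo hDd k).2 _ _ hst
  have hmem : (fM D hDo hDd x, fM D hDo hDd y) ∈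
      Cyl (sig D hDo hDd (k + 1) (restrN x (k + 1))) ×ˢ
        Cyl (sig D hDo hDd (k + 1) (restrN y (k + 1))) :=
    ⟨fM_mem D hDo hDd x (k + 1), fM_mem D hDo hDd y (k + 1)⟩
  have := hbox hmem
  simp only [mem_iInter, Finset.mem_range] at this
  exact this m (Nat.lt_succ_of_le (le_max_left m n))

/-- Mycielski-type theorem for a meager relation on Cantor space. -/
lemma mycielski {R : Set (X × X)} (hR : IsMeagre R) :
    ∃ f : X → X, ∀ x y : X, x ≠ y → (f x, f y) ∉ R := by
  have hres : Rᶜ ∈ residual (X × X) := hR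
  rw [mem_residual_iff] at hres
  obtain ⟨S, hSo, hSd, hScnt, hSsub⟩ := hres
  set S' : Set (Set (X × X)) := insert univ S with hS'
  have hS'cnt : S'.Countable := hScnt.insert _
  have hS'ne : S'.Nonempty := ⟨univ, mem_insert _ _⟩
  obtain ⟨D, hD⟩ := hS'cnt.exists_eq_range hS'ne
  have hDo : ∀ n, IsOpen (D n) := by
    intro n
    have : D n ∈ S' := hD ▸ mem_range_self n
    rcases this with h | h
    · rw [h]; exact isOpen_univ
    · exact hSo _ h
  have hDd : ∀ n, Dense (D n) := by
    intro n
    have : D n ∈ S' := hD ▸ mem_range_self n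
    rcases this with h | h
    · rw [h]; exact dense_univ
    · exact hSd _ h
  refine ⟨fM D hDo hDd, fun x y hxy hRmem => ?_⟩
  have hall : (fM D hDo hDd x, fM D hDo hDd y) ∈ ⋂₀ S := by
    intro t ht
    have : t ∈ range D := by rw [← hD]; exact mem_insert_of_mem _ ht
    obtain ⟨n, rfl⟩ := this
    exact fM_avoid D hDo hDd hxy n
  exact hSsub hall hRmem

/-- The coordinate-flip homeomorphism of Cantor space. -/
def flipH (n : ℕ) : X ≃ₜ X where
  toFun α := Function.update α n (!α n)
  invFun α := Function.update α n (!α n)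
  left_inv α := by
    funext i
    rcases eq_or_ne i n with h | h
    · subst h; simp [Function.update_self]
    · simp [Function.update_of_ne h]
  right_inv α := by
    funext i
    rcases eq_or_ne i n with h | h
    · subst h; simp [Function.update_self]
    · simp [Function.update_of_ne h]
  continuous_toFun := by
    refine continuous_pi fun i => ?_
    rcases eq_or_ne i n with h | h
    · subst h
      simp only [Function.update_self]
      exact (continuous_of_discreteTopology (f := fun b : Bool => !b)).comp (continuous_apply i)
    · simp only [Function.update_of_ne h]
      exact continuous_apply i
  continuous_invFun := by
    refine continuous_pi fun i => ?_
    rcases eq_or_ne i n with h | h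
    · subst h
      simp only [Function.update_self]
      exact (continuous_of_discreteTopology (f := fun b : Bool => !b)).comp (continuous_apply i)
    · simp only [Function.update_of_ne h]
      exact continuous_apply i

lemma flip_unique_diff (n : ℕ) (α : X) : ∃! m : ℕ, α m ≠ Function.update α n (!α n) m := by
  refine ⟨n, by simp, fun m hm => ?_⟩
  by_contra h
  exact hm (by simp [Function.update_of_ne h])

end PawAux

/-- Suppose `≈` is an equivalence relation on the Cantor space `{0,1}^ω` with the Baire
property as a subset of the square, such that sequences differing in exactly one
coordinate are never equivalent. Then `≈` has exactly `2^ℵ₀` equivalence classes. -/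
theorem pawlikowski_lemma (r : (ℕ → Bool) → (ℕ → Bool) → Prop) (hequiv : Equivalence r)
    (hBP : BaireMeasurableSet {p : (ℕ → Bool) × (ℕ → Bool) | r p.1 p.2})
    (hdiff : ∀ α β : ℕ → Bool, (∃! n : ℕ, α n ≠ β n) → ¬ r α β) :
    Cardinal.mk (Quotient (Setoid.mk r hequiv)) = Cardinal.continuum := by
  classical
  open PawAux in
  set Rset : Set ((ℕ → Bool) × (ℕ → Bool)) := {p | r p.1 p.2} with hRset
  obtain ⟨U, hUo, hU⟩ := hBP.residualEq_isOpen
  have hW : {p : (ℕ → Bool) × (ℕ → Bool) | p ∈ Rset ↔ p ∈ U} ∈ residual _ := by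
    have := hU
    rwa [Filter.eventuallyEq_set] at this
  -- Case B: U nonempty leads to a contradiction
  have hUempty : U = ∅ := by
    by_contra hne
    obtain ⟨⟨a, b⟩, hab⟩ := Set.nonempty_iff_ne_empty.2 hne
    obtain ⟨m, hm⟩ := PawAux.exists_cyl_box_subset hUo hab
    set φ : ((ℕ → Bool) × (ℕ → Bool)) ≃ₜ ((ℕ → Bool) × (ℕ → Bool)) :=
      (PawAux.flipH m).prodCongr (Homeomorph.refl _) with hφ
    have hW2 : φ ⁻¹' {p : (ℕ → Bool) × (ℕ → Bool) | p ∈ Rset ↔ p ∈ U} ∈ residual _ := by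
      rw [← φ.residual_map_eq] at hW
      exact hW
    have hT := Filter.inter_mem hW hW2
    have hdense := dense_of_mem_residual hT
    have hBopen : IsOpen (PawAux.Cyl (m, a) ×ˢ PawAux.Cyl (m, b)) :=
      (PawAux.isOpen_Cyl _).prod (PawAux.isOpen_Cyl _)
    have hBne : (PawAux.Cyl (m, a) ×ˢ PawAux.Cyl (m, b)).Nonempty :=
      ⟨(a, b), PawAux.self_mem_Cyl _, PawAux.self_mem_Cyl _⟩
    obtain ⟨p, ⟨hpB1, hpB2⟩, hpW, hpW2⟩ := hdense.inter_open_nonempty _ hBopen hBne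
    have hpU : p ∈ U := hm ⟨hpB1, hpB2⟩
    have h1 : r p.1 p.2 := hpW.2 hpU
    have hφpB : φ p ∈ PawAux.Cyl (m, a) ×ˢ PawAux.Cyl (m, b) := by
      constructor
      · intro i hi
        have : (φ p).1 i = p.1 i := Function.update_of_ne (Nat.ne_of_lt hi) _ _
        rw [this]; exact hpB1 i hi
      · exact hpB2
    have hφpU : φ p ∈ U := hm hφpB
    have h2 : r (Function.update p.1 m (!p.1 m)) p.2 := hpW2.2 hφpU
    have h3 : r p.1 (Function.update p.1 m (!p.1 m)) := hequiv.trans h1 (hequiv.symm h2)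
    exact hdiff _ _ (PawAux.flip_unique_diff m p.1) h3
  -- hence Rset is meager
  have hmeag : IsMeagre Rset := by
    have : {p : (ℕ → Bool) × (ℕ → Bool) | p ∈ Rset ↔ p ∈ U} ⊆ Rsetᶜ := by
      intro p hp hpR
      rw [hUempty] at hp
      exact (hp.1 hpR).elim
    exact Filter.mem_of_superset hW this
  obtain ⟨f, hf⟩ := PawAux.mycielski hmeag
  have hmkX : Cardinal.mk (ℕ → Bool) = Cardinal.continuum := by
    simp [Cardinal.mk_arrow]
  refine le_antisymm ?_ ?_
  · calc Cardinal.mk (Quotient (Setoid.mk r hequiv)) ≤ Cardinal.mk (ℕ → Bool) :=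
          Cardinal.mk_le_of_surjective (f := Quotient.mk (Setoid.mk r hequiv))
            (fun q => q.exists_rep)
      _ = Cardinal.continuum := hmkX
  · rw [← hmkX]
    refine Cardinal.mk_le_of_injective (f := fun x => (Quotient.mk (Setoid.mk r hequiv) (f x)))
      fun x y hxy => ?_
    by_contra hne
    exact hf x y hne (Quotient.exact hxy)
end

section
/- Every element of the infinite product ∏_{ω} A₅ of copies of the alternating group A₅ is a product of exactly two conjugates of the element g whose every coordinate is the 3-cycle (1 2 3). Consequently, the normal closure of g in ∏_{ω} A₅ is the whole group, so ∏_{ω} A₅ is not a comonster group. -/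
set_option maxRecDepth 10000 in
set_option maxHeartbeats 2000000 in
private lemma A5_two_conj : ∀ h : alternatingGroup (Fin 5),
    ∃ a b : alternatingGroup (Fin 5),
      h = (a * ⟨c[(0 : Fin 5), 1, 2], Equiv.Perm.mem_alternatingGroup.mpr (by decide)⟩ * a⁻¹) *
          (b * ⟨c[(0 : Fin 5), 1, 2], Equiv.Perm.mem_alternatingGroup.mpr (by decide)⟩ * b⁻¹) := by
  decide

/-- Every element of `∏_ω A₅` is a product of exactly two conjugates of the element `g`
all of whose coordinates are the 3-cycle `(0 1 2)`; consequently the normal closure of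
`g` is the whole group, and `∏_ω A₅` is not a comonster group (it is the normal closure
of a finite subset). -/
theorem prod_A5_not_comonster
    (g : ∀ _ : ℕ, alternatingGroup (Fin 5))
    (hg : g = fun _ => (⟨c[(0 : Fin 5), 1, 2], by first | (simp [Equiv.Perm.mem_alternatingGroup]; decide) | decide⟩ : alternatingGroup (Fin 5))) :
    (∀ h : ∀ _ : ℕ, alternatingGroup (Fin 5),
      ∃ a b : ∀ _ : ℕ, alternatingGroup (Fin 5),
        h = (a * g * a⁻¹) * (b * g * b⁻¹)) ∧
    Subgroup.normalClosure {g} = ⊤ ∧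
    ¬ (∀ S : Set (∀ _ : ℕ, alternatingGroup (Fin 5)),
        S.Finite → Subgroup.normalClosure S ≠ ⊤) := by
  have part1 : ∀ h : ∀ _ : ℕ, alternatingGroup (Fin 5),
      ∃ a b : ∀ _ : ℕ, alternatingGroup (Fin 5),
        h = (a * g * a⁻¹) * (b * g * b⁻¹) := by
    intro h
    choose a b hab using fun n => A5_two_conj (h n)
    refine ⟨a, b, ?_⟩
    funext n
    simpa [hg, Pi.mul_apply, Pi.inv_apply] using hab n
  have part2 : Subgroup.normalClosure {g} = ⊤ := by
    rw [eq_top_iff]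
    intro h _
    obtain ⟨a, b, hab⟩ := part1 h
    rw [hab]
    have hgmem : g ∈ Subgroup.normalClosure {g} :=
      Subgroup.subset_normalClosure (Set.mem_singleton g)
    exact mul_mem (Subgroup.normalClosure_normal.conj_mem _ hgmem a)
      (Subgroup.normalClosure_normal.conj_mem _ hgmem b)
  exact ⟨part1, part2, fun H => H {g} (Set.finite_singleton g) part2⟩
end

section
/- Let X be a Polish space with basepoint x, and let 𝒫 be a pointclass containing the closed sets and closed under continuous images between Polish spaces, finite products, finite intersections, and countable unions. If K ⊆ L_x is a set of loops in 𝒫, then the subgroup ⟨[K]⟩ of π₁(X,x) generated by the homotopy classes of loops in K is a 𝒫-subgroup (i.e., the set of loops representing its elements is in 𝒫). -/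
open FundamentalGroup

attribute [local instance] Path.Homotopic.setoid

section Aux

open CategoryTheory

theorem auxPolishCM (α : Type) [TopologicalSpace α] [CompactSpace α]
    [SecondCountableTopology α] [LocallyCompactSpace α]
    (β : Type) [TopologicalSpace β] [PolishSpace β] : PolishSpace C(α, β) := by
  letI := TopologicalSpace.upgradeIsCompletelyMetrizable β
  haveI : CompleteSpace C(α, β) :=
    ((ContinuousMap.isUniformEmbedding_equivBoundedOfCompact α
        β).toIsUniformInducing.completeSpace_congr
      (ContinuousMap.equivBoundedOfCompact α β).surjective).mpr inferInstance
  infer_instance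

theorem auxPolishPath {X : Type} [TopologicalSpace X] [PolishSpace X] (x y : X) :
    PolishSpace (Path x y) := by
  haveI := auxPolishCM unitInterval X
  have hemb : Topology.IsClosedEmbedding (fun γ : Path x y => γ.toContinuousMap) := by
    refine ⟨⟨⟨rfl⟩, fun a b h => Path.ext (funext fun t => ContinuousMap.congr_fun h t)⟩, ?_⟩
    have : Set.range (fun γ : Path x y => γ.toContinuousMap)
        = {f : C(unitInterval, X) | f 0 = x} ∩ {f | f 1 = y} := by
      ext f
      constructor
      · rintro ⟨γ, rfl⟩; exact ⟨γ.source, γ.target⟩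
      · rintro ⟨h0, h1⟩; exact ⟨⟨f, h0, h1⟩, rfl⟩
    rw [this]
    exact ((isClosed_singleton.preimage (continuous_eval_const 0)).inter
      (isClosed_singleton.preimage (continuous_eval_const 1)))
  exact hemb.polishSpace

/-- The sets of `n`-fold concatenations of loops from `T`. -/
def wordSets {X : Type} [TopologicalSpace X] {x : X} (T : Set (Path x x)) : ℕ → Set (Path x x)
  | 0 => {Path.refl x}
  | n+1 => (fun z : Path x x × Path x x => z.1.trans z.2) '' ((wordSets T n) ×ˢ T)

theorem wordSets_concat {X : Type} [TopologicalSpace X] {x : X} {T : Set (Path x x)} :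
    ∀ m, ∀ q ∈ wordSets T m, ∀ n, ∀ r ∈ wordSets T n,
      ∃ w ∈ wordSets T (n + m), (⟦r.trans q⟧ : Path.Homotopic.Quotient x x) = ⟦w⟧ := by
  intro m
  induction m with
  | zero =>
    intro q hq n r hr
    simp only [wordSets, Set.mem_singleton_iff] at hq
    subst hq
    exact ⟨r, hr, Quotient.sound ⟨Path.Homotopy.transRefl r⟩⟩
  | succ m ih =>
    rintro q ⟨⟨a, t⟩, ⟨ha, ht⟩, rfl⟩ n r hr
    obtain ⟨w', hw', hw'eq⟩ := ih a ha n r hr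
    refine ⟨w'.trans t, ⟨⟨w', t⟩, ⟨hw', ht⟩, rfl⟩, ?_⟩
    calc (⟦r.trans (a.trans t)⟧ : Path.Homotopic.Quotient x x)
        = ⟦(r.trans a).trans t⟧ := Quotient.sound ⟨(Path.Homotopy.transAssoc r a t).symm⟩
      _ = ⟦w'.trans t⟧ :=
        Quotient.sound (Path.Homotopic.hcomp (Quotient.exact hw'eq) (Path.Homotopic.refl t))

theorem wordSets_symm {X : Type} [TopologicalSpace X] {x : X} {T : Set (Path x x)}
    (hT : ∀ t ∈ T, t.symm ∈ T) :
    ∀ n, ∀ q ∈ wordSets T n,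
      ∃ w ∈ wordSets T n, (⟦q.symm⟧ : Path.Homotopic.Quotient x x) = ⟦w⟧ := by
  intro n
  induction n with
  | zero =>
    intro q hq
    simp only [wordSets, Set.mem_singleton_iff] at hq
    subst hq
    exact ⟨Path.refl x, rfl, by rw [Path.refl_symm]⟩
  | succ n ih =>
    rintro q ⟨⟨a, t⟩, ⟨ha, ht⟩, rfl⟩
    obtain ⟨w', hw', hw'eq⟩ := ih a ha
    have h1 : (Path.refl x).trans t.symm ∈ wordSets T 1 :=
      ⟨⟨Path.refl x, t.symm⟩, ⟨rfl, hT t ht⟩, rfl⟩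
    obtain ⟨w, hw, hweq⟩ := wordSets_concat n w' hw' 1 ((Path.refl x).trans t.symm) h1
    rw [Nat.add_comm] at hw
    refine ⟨w, hw, ?_⟩
    calc (⟦(a.trans t).symm⟧ : Path.Homotopic.Quotient x x)
        = ⟦t.symm.trans a.symm⟧ := by rw [Path.trans_symm]
      _ = ⟦((Path.refl x).trans t.symm).trans w'⟧ :=
        Quotient.sound (Path.Homotopic.hcomp ⟨(Path.Homotopy.reflTrans t.symm).symm⟩
          (Quotient.exact hw'eq))
      _ = ⟦w⟧ := hweq

theorem auxCompLift {X : Type} [TopologicalSpace X] {x : X} (P₀ P₁ : Path x x) :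
    (⟦P₀.trans P₁⟧ : Path.Homotopic.Quotient x x) = Path.Homotopic.Quotient.trans ⟦P₀⟧ ⟦P₁⟧ :=
  rfl

theorem auxFromPath_mul {X : TopCat} {x : X} (p q : Path.Homotopic.Quotient x x) :
    fromPath p * fromPath q = fromPath (q.trans p) :=
  rfl

theorem auxFromPath_one {X : TopCat} {x : X} :
    (1 : FundamentalGroup X x) = fromPath ⟦Path.refl x⟧ :=
  rfl

theorem auxFromPath_injective {X : TopCat} {x : X} {p q : Path.Homotopic.Quotient x x}
    (h : fromPath p = fromPath q) : p = q :=
  h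

theorem auxFromPath_inv {X : TopCat} {x : X} (q : Path x x) :
    (fromPath (⟦q⟧ : Path.Homotopic.Quotient x x))⁻¹ = fromPath ⟦q.symm⟧ := by
  apply inv_eq_of_mul_eq_one_right
  exact congrArg fromPath (Quotient.sound ⟨(Path.Homotopy.reflSymmTrans q).symm⟩)

theorem auxFromPath_trans {X : TopCat} {x : X} (a b : Path x x) :
    fromPath (⟦a.trans b⟧ : Path.Homotopic.Quotient x x) = fromPath ⟦b⟧ * fromPath ⟦a⟧ := by
  rfl

/-- The closed set of homotopy data witnessing homotopy of loops at `x`. -/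
def auxE {X : Type} [TopologicalSpace X] (x : X) :
    Set (C(unitInterval × unitInterval, X) × (Path x x × Path x x)) :=
  (⋂ t, {z | z.1 (0, t) = z.2.1 t}) ∩ ((⋂ t, {z | z.1 (1, t) = z.2.2 t}) ∩
    ((⋂ s, {z | z.1 (s, 0) = x}) ∩ (⋂ s, {z | z.1 (s, 1) = x})))

theorem auxE_mem {X : Type} [TopologicalSpace X] (x : X)
    (z : C(unitInterval × unitInterval, X) × (Path x x × Path x x)) :
    z ∈ auxE x ↔ ((∀ t, z.1 (0, t) = z.2.1 t) ∧ (∀ t, z.1 (1, t) = z.2.2 t) ∧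
        (∀ s, z.1 (s, 0) = x) ∧ (∀ s, z.1 (s, 1) = x)) := by
  simp [auxE, Set.mem_iInter]

theorem auxHomotopicSet {X : Type} [TopologicalSpace X] (x : X) :
    {pq : Path x x × Path x x | pq.1.Homotopic pq.2} = Prod.snd '' auxE x := by
  ext ⟨p, q⟩
  constructor
  · rintro ⟨H⟩
    refine ⟨(H.toContinuousMap, (p, q)), (auxE_mem x _).mpr ⟨?_, ?_, ?_, ?_⟩, rfl⟩
    · exact fun t => H.map_zero_left t
    · exact fun t => H.map_one_left t
    · exact fun s => (ContinuousMap.HomotopyRel.eq_fst H s (.inl rfl)).trans p.source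
    · exact fun s => (ContinuousMap.HomotopyRel.eq_fst H s (.inr rfl)).trans p.target
  · rintro ⟨⟨H, p', q'⟩, hz, heq⟩
    obtain ⟨h0, h1, hs0, hs1⟩ := (auxE_mem x _).mp hz
    have hp : p' = p := congrArg Prod.fst heq
    have hq : q' = q := congrArg Prod.snd heq
    subst hp; subst hq
    refine ⟨⟨⟨H, h0, h1⟩, ?_⟩⟩
    rintro t s (rfl | rfl)
    · exact (hs0 t).trans (p'.source).symm
    · exact (hs1 t).trans (p'.target).symm

theorem auxE_closed {X : Type} [MetricSpace X] (x : X) : IsClosed (auxE x) := by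
  refine IsClosed.inter ?_ (IsClosed.inter ?_ (IsClosed.inter ?_ ?_))
  · exact isClosed_iInter fun t => isClosed_eq
      ((continuous_eval_const (0, t)).comp continuous_fst)
      ((continuous_eval_const t).comp (continuous_fst.comp continuous_snd))
  · exact isClosed_iInter fun t => isClosed_eq
      ((continuous_eval_const (1, t)).comp continuous_fst)
      ((continuous_eval_const t).comp (continuous_snd.comp continuous_snd))
  · exact isClosed_iInter fun s => isClosed_eq
      ((continuous_eval_const (s, 0)).comp continuous_fst) continuous_const
  · exact isClosed_iInter fun s => isClosed_eq
      ((continuous_eval_const (s, 1)).comp continuous_fst) continuous_const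

end Aux

/-- Let `X` be a Polish space with basepoint `x` and `𝒫` a pointclass containing the
closed sets and closed under continuous images between Polish spaces, finite products,
finite intersections, and countable unions.  If `K ⊆ L_x` is a set of loops in `𝒫`, then
the subgroup `⟨[K]⟩` of `π₁(X, x)` generated by the homotopy classes of loops in `K` is
a `𝒫`-subgroup: the set of loops representing its elements is in `𝒫`. -/
theorem generated_subgroup_mem_pointclass
    (P : (Z : Type) → [inst : TopologicalSpace Z] → Set (Set Z))
    (hclosed : ∀ (Z : Type) [TopologicalSpace Z] (C : Set Z), IsClosed C → C ∈ P Z)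
    (himage : ∀ (Z W : Type) [TopologicalSpace Z] [PolishSpace Z]
      [TopologicalSpace W] [PolishSpace W] (f : Z → W),
      Continuous f → ∀ S ∈ P Z, f '' S ∈ P W)
    (hprod : ∀ (Z W : Type) [TopologicalSpace Z] [TopologicalSpace W],
      ∀ S ∈ P Z, ∀ T ∈ P W, S ×ˢ T ∈ P (Z × W))
    (hinter : ∀ (Z : Type) [TopologicalSpace Z], ∀ S ∈ P Z, ∀ T ∈ P Z, S ∩ T ∈ P Z)
    (hunion : ∀ (Z : Type) [TopologicalSpace Z] (S : ℕ → Set Z),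
      (∀ n, S n ∈ P Z) → (⋃ n, S n) ∈ P Z)
    {X : Type} [MetricSpace X] [PolishSpace X] [PathConnectedSpace X] (x : X)
    (K : Set (Path x x)) (hK : K ∈ P (Path x x)) :
    {p : Path x x |
      FundamentalGroup.fromPath (X := TopCat.of X) (⟦p⟧ : Path.Homotopic.Quotient x x) ∈
        Subgroup.closure {γ : FundamentalGroup X x | ∃ q ∈ K,
          γ = FundamentalGroup.fromPath (X := TopCat.of X)
            (⟦q⟧ : Path.Homotopic.Quotient x x)}} ∈ P (Path x x) := by
  haveI hPI : PolishSpace C(unitInterval × unitInterval, X) := auxPolishCM _ X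
  haveI hPP : PolishSpace (Path x x) := auxPolishPath x x
  set gens : Set (FundamentalGroup X x) := {γ : FundamentalGroup X x | ∃ q ∈ K,
    γ = FundamentalGroup.fromPath (X := TopCat.of X)
      (⟦q⟧ : Path.Homotopic.Quotient x x)} with hgens
  set T : Set (Path x x) := (K ∪ Path.symm '' K) ∪ {Path.refl x} with hTdef
  have hTsymm : ∀ t ∈ T, t.symm ∈ T := by
    rintro t ((ht | ⟨q, hq, rfl⟩) | ht)
    · exact Or.inl (Or.inr ⟨t, ht, rfl⟩)
    · exact Or.inl (Or.inl (by rwa [Path.symm_symm]))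
    · rw [Set.mem_singleton_iff] at ht; subst ht
      rw [Path.refl_symm]
      exact Or.inr rfl
  -- `T` is in the pointclass
  have hTP : T ∈ P (Path x x) := by
    have h := hunion (Path x x)
      (fun n => if n = 0 then K else if n = 1 then Path.symm '' K else {Path.refl x}) ?_
    · convert h using 1
      ext p
      simp only [Set.mem_iUnion]
      constructor
      · rintro ((h | h) | h)
        · exact ⟨0, h⟩
        · exact ⟨1, h⟩
        · exact ⟨2, h⟩
      · rintro ⟨n, hn⟩
        split_ifs at hn
        · exact Or.inl (Or.inl hn)
        · exact Or.inl (Or.inr hn)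
        · exact Or.inr hn
    · intro n
      split_ifs
      · exact hK
      · exact himage _ _ Path.symm Path.continuous_symm K hK
      · exact hclosed _ _ isClosed_singleton
  -- the word sets are in the pointclass
  have hA : ∀ n, wordSets T n ∈ P (Path x x) := by
    intro n
    induction n with
    | zero => exact hclosed _ _ isClosed_singleton
    | succ n ih =>
      exact himage _ _ _ Path.continuous_trans _ (hprod _ _ _ ih _ hTP)
  -- the homotopy relation is in the pointclass
  have hD : {pq : Path x x × Path x x | pq.1.Homotopic pq.2} ∈ P (Path x x × Path x x) := by
    rw [auxHomotopicSet x]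
    exact himage _ _ Prod.snd continuous_snd _ (hclosed _ _ (auxE_closed x))
  -- the saturations of word sets are in the pointclass
  have hDn : ∀ n, Prod.fst '' ({pq : Path x x × Path x x | pq.1.Homotopic pq.2}
      ∩ Set.univ ×ˢ wordSets T n) ∈ P (Path x x) := by
    intro n
    exact himage _ _ Prod.fst continuous_fst _
      (hinter _ _ hD _ (hprod _ _ _ (hclosed _ _ isClosed_univ) _ (hA n)))
  -- every word represents an element of the generated subgroup
  have hword : ∀ n, ∀ w ∈ wordSets T n,
      FundamentalGroup.fromPath (X := TopCat.of X) (⟦w⟧ : Path.Homotopic.Quotient x x) ∈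
        Subgroup.closure gens := by
    intro n
    induction n with
    | zero =>
      intro w hw
      simp only [wordSets, Set.mem_singleton_iff] at hw
      subst hw
      exact (one_mem (Subgroup.closure gens) : (1 : FundamentalGroup X x) ∈ Subgroup.closure gens)
    | succ n ih =>
      rintro w ⟨⟨a, t⟩, ⟨ha, ht⟩, rfl⟩
      refine (congrArg (· ∈ Subgroup.closure gens) (auxFromPath_trans (X := TopCat.of X) a t)).mpr ?_
      refine mul_mem ?_ (ih a ha)
      rcases ht with (ht | ⟨q, hq, rfl⟩) | ht
      · exact Subgroup.subset_closure ⟨t, ht, rfl⟩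
      · refine (congrArg (· ∈ Subgroup.closure gens) (auxFromPath_inv (X := TopCat.of X) q)).mp ?_
        exact inv_mem (Subgroup.subset_closure ⟨q, hq, rfl⟩)
      · rw [Set.mem_singleton_iff] at ht; subst ht
        exact (one_mem (Subgroup.closure gens) : (1 : FundamentalGroup X x) ∈ Subgroup.closure gens)
  -- the key set identity
  have hmain : {p : Path x x |
      FundamentalGroup.fromPath (X := TopCat.of X) (⟦p⟧ : Path.Homotopic.Quotient x x) ∈
        Subgroup.closure gens}
      = ⋃ n, Prod.fst '' ({pq : Path x x × Path x x | pq.1.Homotopic pq.2}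
          ∩ Set.univ ×ˢ wordSets T n) := by
    ext p
    simp only [Set.mem_setOf_eq, Set.mem_iUnion, Set.mem_image, Set.mem_inter_iff,
      Set.mem_prod, Set.mem_univ, true_and]
    constructor
    · intro hp
      have key : ∃ n, ∃ w ∈ wordSets T n,
          FundamentalGroup.fromPath (X := TopCat.of X) (⟦p⟧ : Path.Homotopic.Quotient x x)
            = FundamentalGroup.fromPath (X := TopCat.of X)
              (⟦w⟧ : Path.Homotopic.Quotient x x) := by
        refine Subgroup.closure_induction
          (p := fun g _ => ∃ n, ∃ w ∈ wordSets T n,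
            g = FundamentalGroup.fromPath (X := TopCat.of X)
              (⟦w⟧ : Path.Homotopic.Quotient x x)) ?_ ?_ ?_ ?_ hp
        · rintro g ⟨q, hq, rfl⟩
          refine ⟨1, (Path.refl x).trans q, ⟨⟨Path.refl x, q⟩, ⟨rfl, Or.inl (Or.inl hq)⟩, rfl⟩, ?_⟩
          exact (congrArg FundamentalGroup.fromPath
            (Quotient.sound ⟨Path.Homotopy.reflTrans q⟩)).symm
        · exact ⟨0, Path.refl x, rfl, auxFromPath_one⟩
        · rintro g h _ _ ⟨m, a, ha, rfl⟩ ⟨n, b, hb, rfl⟩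
          obtain ⟨w, hw, hweq⟩ := wordSets_concat m a ha n b hb
          exact ⟨n + m, w, hw, by exact hweq⟩
        · rintro g _ ⟨n, a, ha, rfl⟩
          obtain ⟨w, hw, hweq⟩ := wordSets_symm hTsymm n a ha
          exact ⟨n, w, hw, by erw [auxFromPath_inv, hweq]⟩
      obtain ⟨n, w, hw, heq⟩ := key
      exact ⟨n, ⟨p, w⟩, ⟨Path.Homotopic.Quotient.exact (auxFromPath_injective (X := TopCat.of X) heq), hw⟩, rfl⟩
    · rintro ⟨n, ⟨p₁, w⟩, ⟨hhom, hw⟩, rfl⟩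
      have : FundamentalGroup.fromPath (X := TopCat.of X)
          (⟦p₁⟧ : Path.Homotopic.Quotient x x)
          = FundamentalGroup.fromPath (X := TopCat.of X)
            (⟦w⟧ : Path.Homotopic.Quotient x x) :=
        congrArg _ (Quotient.sound hhom)
      rw [this]
      exact hword n w hw
  rw [hmain]
  exact hunion _ _ hDn
end

section
/- Let X be a Polish space with basepoint x, and 𝒫 a pointclass containing the closed sets and closed under continuous images between Polish spaces, finite products, finite intersections, and countable unions. If K ⊆ L_x is in 𝒫, then the normal closure ⟨⟨[K]⟩⟩ in π₁(X,x) of the set of homotopy classes of loops in K is a 𝒫-subgroup. -/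
open FundamentalGroup

attribute [local instance] Path.Homotopic.setoid

namespace NCAux

open unitInterval CategoryTheory Topology

lemma polishCM (Y : Type) [TopologicalSpace Y] [PolishSpace Y] : PolishSpace C(I, Y) := by
  letI := TopologicalSpace.upgradeIsCompletelyMetrizable Y
  infer_instance

lemma pathClosedEmb {X : Type} [MetricSpace X] (x y : X) :
    Topology.IsClosedEmbedding ((↑) : Path x y → C(I, X)) := by
  refine ⟨⟨Topology.IsInducing.induced _,
    fun a b h => Path.ext (congrArg ContinuousMap.toFun h)⟩, ?_⟩
  have : Set.range ((↑) : Path x y → C(I, X))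
      = {f : C(I, X) | f 0 = x} ∩ {f : C(I, X) | f 1 = y} := by
    ext f
    constructor
    · rintro ⟨p, rfl⟩; exact ⟨p.source, p.target⟩
    · rintro ⟨h0, h1⟩; exact ⟨⟨f, h0, h1⟩, rfl⟩
  rw [this]
  exact (isClosed_eq (ContinuousEvalConst.continuous_eval_const 0) continuous_const).inter
    (isClosed_eq (ContinuousEvalConst.continuous_eval_const 1) continuous_const)

lemma polishPath {X : Type} [MetricSpace X] [PolishSpace X] (x y : X) :
    PolishSpace (Path x y) :=
  letI := polishCM X
  (pathClosedEmb x y).polishSpace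

lemma t2Path {X : Type} [MetricSpace X] (x y : X) : T2Space (Path x y) :=
  (pathClosedEmb x y).toIsEmbedding.t2Space

lemma homotopic_iff_joined {X : Type} [TopologicalSpace X] {x y : X} (p q : Path x y) :
    p.Homotopic q ↔ ∃ g : C(I, Path x y), g 0 = p ∧ g 1 = q := by
  constructor
  · rintro ⟨H⟩
    have : Continuous fun s => H.eval s := by
      apply continuous_induced_rng.mpr
      exact Continuous.congr H.toHomotopy.curry.continuous fun s => by ext t; rfl
    refine ⟨⟨fun s => H.eval s, this⟩, ?_, ?_⟩
    · show H.eval 0 = p; simp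
    · show H.eval 1 = q; simp
  · rintro ⟨g, h0, h1⟩
    refine ⟨⟨⟨⟨fun st => g st.1 st.2, ?_⟩, ?_, ?_⟩, ?_⟩⟩
    · exact continuous_eval.comp ((g.continuous.comp continuous_fst).prodMk continuous_snd)
    · intro t; show g 0 t = _; rw [h0]; rfl
    · intro t; show g 1 t = _; rw [h1]; rfl
    · intro s t ht
      simp only [Set.mem_insert_iff, Set.mem_singleton_iff] at ht
      rcases ht with rfl | rfl
      · show g s 0 = p 0; rw [(g s).source, p.source]
      · show g s 1 = p 1; rw [(g s).target, p.target]

end NCAux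

open CategoryTheory unitInterval in
/-- Let `X` be a Polish space with basepoint `x` and `𝒫` a pointclass containing the
closed sets and closed under continuous images between Polish spaces, finite products,
finite intersections, and countable unions.  If `K ⊆ L_x` is a set of loops in `𝒫`, then
the normal closure `⟨⟨[K]⟩⟩` in `π₁(X, x)` of the set of homotopy classes of loops in `K` is
a `𝒫`-subgroup: the set of loops representing its elements is in `𝒫`. -/
theorem normalClosure_mem_pointclass
    (P : (Z : Type) → [inst : TopologicalSpace Z] → Set (Set Z))
    (hclosed : ∀ (Z : Type) [TopologicalSpace Z] (C : Set Z), IsClosed C → C ∈ P Z)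
    (himage : ∀ (Z W : Type) [TopologicalSpace Z] [PolishSpace Z]
      [TopologicalSpace W] [PolishSpace W] (f : Z → W),
      Continuous f → ∀ S ∈ P Z, f '' S ∈ P W)
    (hprod : ∀ (Z W : Type) [TopologicalSpace Z] [TopologicalSpace W],
      ∀ S ∈ P Z, ∀ T ∈ P W, S ×ˢ T ∈ P (Z × W))
    (hinter : ∀ (Z : Type) [TopologicalSpace Z], ∀ S ∈ P Z, ∀ T ∈ P Z, S ∩ T ∈ P Z)
    (hunion : ∀ (Z : Type) [TopologicalSpace Z] (S : ℕ → Set Z),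
      (∀ n, S n ∈ P Z) → (⋃ n, S n) ∈ P Z)
    {X : Type} [MetricSpace X] [PolishSpace X] [PathConnectedSpace X] (x : X)
    (K : Set (Path x x)) (hK : K ∈ P (Path x x)) :
    {p : Path x x |
      FundamentalGroup.fromPath (X := TopCat.of X) (⟦p⟧ : Path.Homotopic.Quotient x x) ∈
        Subgroup.normalClosure {γ : FundamentalGroup X x | ∃ q ∈ K,
          γ = FundamentalGroup.fromPath (X := TopCat.of X)
            (⟦q⟧ : Path.Homotopic.Quotient x x)}} ∈ P (Path x x) := by
  classical
  haveI hPL : PolishSpace (Path x x) := NCAux.polishPath x x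
  haveI hPC : PolishSpace C(I, Path x x) := NCAux.polishCM (Path x x)
  haveI hT2 : T2Space (Path x x) := NCAux.t2Path x x
  -- the loop → π₁ map and its properties
  let F : Path x x → FundamentalGroup X x := fun p =>
    FundamentalGroup.fromPath (X := TopCat.of X) (⟦p⟧ : Path.Homotopic.Quotient x x)
  let T : Set (FundamentalGroup X x) := {γ | ∃ q ∈ K, γ = F q}
  have hFtrans : ∀ p q : Path x x, F (p.trans q) = F q * F p := fun p q => rfl
  have hFsymm : ∀ p : Path x x, (F p)⁻¹ = F p.symm := fun p => rfl
  have hFone : F (Path.refl x) = 1 := rfl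
  have hFsurj : ∀ γ : FundamentalGroup X x, ∃ p, γ = F p := by
    intro γ
    obtain ⟨p, hp⟩ := Quotient.exists_rep (γ.toPath : Path.Homotopic.Quotient x x)
    exact ⟨p, hp.symm⟩
  have hFhom : ∀ p q : Path x x, F p = F q → p.Homotopic q := fun p q h =>
    Quotient.exact (congrArg (fun e => e.toPath) h : (⟦p⟧ : Path.Homotopic.Quotient x x) = ⟦q⟧)
  have hFcong : ∀ p q : Path x x, p.Homotopic q → F p = F q := fun p q h =>
    congrArg (fun e : Path.Homotopic.Quotient x x =>
      FundamentalGroup.fromPath (X := TopCat.of X) e) (Quotient.sound h)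
  have hconj : ∀ a q' : Path x x, F ((a.symm.trans q').trans a) = F a * F q' * (F a)⁻¹ := by
    intro a q'
    rw [hFtrans, hFtrans, ← hFsymm, ← mul_assoc]
  -- loop-level building blocks
  let K₂ : Set (Path x x) := K ∪ Path.symm '' K
  have hK₂ : K₂ ∈ P (Path x x) := by
    have h1 : Path.symm '' K ∈ P (Path x x) :=
      himage _ _ Path.symm Path.continuous_symm K hK
    have hU : K₂ = ⋃ n : ℕ, (fun n => if n = 0 then K else Path.symm '' K) n := by
      ext z
      simp only [Set.mem_iUnion]
      constructor
      · rintro (hz | hz)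
        · exact ⟨0, by simpa using hz⟩
        · exact ⟨1, by simpa using hz⟩
      · rintro ⟨n, hn⟩
        by_cases h : n = 0
        · rw [h, if_pos rfl] at hn; exact Or.inl hn
        · rw [if_neg h] at hn; exact Or.inr hn
    rw [hU]
    refine hunion _ _ fun n => ?_
    by_cases h : n = 0
    · simpa [h] using hK
    · simpa [h] using h1
  let Cc : Path x x × Path x x → Path x x := fun z => (z.1.symm.trans z.2).trans z.1
  have hCccont : Continuous Cc :=
    Continuous.path_trans
      (Continuous.path_trans (Path.continuous_symm.comp continuous_fst) continuous_snd)
      continuous_fst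
  let Cset : Set (Path x x) := Cc '' (Set.univ ×ˢ K₂)
  have hCsetP : Cset ∈ P (Path x x) :=
    himage _ _ Cc hCccont _ (hprod _ _ _ (hclosed _ _ isClosed_univ) _ hK₂)
  let W : ℕ → Set (Path x x) := fun n =>
    Nat.rec {Path.refl x}
      (fun _ Wn => (fun z : Path x x × Path x x => z.1.trans z.2) '' (Wn ×ˢ Cset)) n
  have hW0 : W 0 = {Path.refl x} := rfl
  have hWs : ∀ n, W (n + 1)
      = (fun z : Path x x × Path x x => z.1.trans z.2) '' (W n ×ˢ Cset) := fun _ => rfl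
  have hWP : ∀ n, W n ∈ P (Path x x) := by
    intro n
    induction n with
    | zero => exact hclosed _ _ isClosed_singleton
    | succ n ih =>
      exact himage _ _ _ Path.continuous_trans _ (hprod _ _ _ ih _ hCsetP)
  -- forward: everything in W n maps into the normal closure
  have hCmem : ∀ c ∈ Cset, F c ∈ Subgroup.normalClosure T := by
    rintro c ⟨⟨a, q'⟩, ⟨-, hq'⟩, rfl⟩
    show F ((a.symm.trans q').trans a) ∈ _
    rw [hconj]
    rcases hq' with hq' | ⟨q, hq, rfl⟩
    · have hT : F q' ∈ T := ⟨q', hq', rfl⟩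
      exact Subgroup.normalClosure_normal.conj_mem _
        (Subgroup.subset_normalClosure hT) _
    · have hT : F q ∈ T := ⟨q, hq, rfl⟩
      rw [← hFsymm]
      exact Subgroup.normalClosure_normal.conj_mem _
        (inv_mem (Subgroup.subset_normalClosure hT)) _
  have keyfwd : ∀ n, ∀ w ∈ W n, F w ∈ Subgroup.normalClosure T := by
    intro n
    induction n with
    | zero =>
      intro w hw
      rw [hW0, Set.mem_singleton_iff] at hw
      subst hw
      rw [hFone]
      exact one_mem _
    | succ n ih =>
      intro w hw
      rw [hWs] at hw
      obtain ⟨⟨u, c⟩, ⟨hu, hc⟩, rfl⟩ := hw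
      show F (u.trans c) ∈ _
      rw [hFtrans]
      exact mul_mem (hCmem c hc) (ih u hu)
  -- backward: every element of the normal closure is F of some element of some W n
  have keybwd : ∀ γ ∈ Subgroup.normalClosure T, ∃ n, ∃ w ∈ W n, F w = γ := by
    intro γ hγ
    have hγ' : γ ∈ Submonoid.closure
        (Group.conjugatesOfSet T ∪ (Group.conjugatesOfSet T)⁻¹) := by
      rw [← Subgroup.closure_toSubmonoid]; exact hγ
    obtain ⟨l, hl, hlprod⟩ := Submonoid.exists_list_of_mem_closure hγ'
    subst hlprod
    clear hγ hγ'
    induction l with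
    | nil =>
      exact ⟨0, Path.refl x, Set.mem_singleton _, by rw [List.prod_nil, hFone]⟩
    | cons g t ih =>
      obtain ⟨n, w, hw, hFw⟩ := ih fun y hy => hl y (List.mem_cons_of_mem _ hy)
      have hg := hl g (List.mem_cons_self (a := g) (l := t))
      have hcex : ∃ c ∈ Cset, F c = g := by
        rcases hg with hg | hg
        · rcases Group.mem_conjugatesOfSet_iff.mp hg with ⟨γ₀, hγT, hcj⟩
          rcases isConj_iff.mp hcj with ⟨d, hd⟩
          rcases hγT with ⟨q, hqK, rfl⟩
          rcases hFsurj d with ⟨a, rfl⟩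
          refine ⟨Cc (a, q), ⟨(a, q), ⟨trivial, Or.inl hqK⟩, rfl⟩, ?_⟩
          show F ((a.symm.trans q).trans a) = g
          rw [hconj]; exact hd
        · rw [Set.mem_inv] at hg
          rcases Group.mem_conjugatesOfSet_iff.mp hg with ⟨γ₀, hγT, hcj⟩
          rcases isConj_iff.mp hcj with ⟨d, hd⟩
          rcases hγT with ⟨q, hqK, rfl⟩
          rcases hFsurj d with ⟨a, rfl⟩
          refine ⟨Cc (a, q.symm), ⟨(a, q.symm), ⟨trivial, Or.inr ⟨q, hqK, rfl⟩⟩, rfl⟩, ?_⟩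
          show F ((a.symm.trans q.symm).trans a) = g
          have h2 : g = (F a * F q * (F a)⁻¹)⁻¹ := by rw [hd, inv_inv]
          rw [hconj, ← hFsymm, h2]
          group
      obtain ⟨c, hc, hFc⟩ := hcex
      refine ⟨n + 1, w.trans c, ?_, ?_⟩
      · rw [hWs]; exact ⟨(w, c), ⟨hw, hc⟩, rfl⟩
      · rw [hFtrans, hFw, hFc, List.prod_cons]
  -- the homotopy relation as a continuous image
  let ev : C(I, Path x x) → Path x x × Path x x := fun g => (g 0, g 1)
  have hevcont : Continuous ev :=
    (ContinuousEvalConst.continuous_eval_const 0).prodMk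
      (ContinuousEvalConst.continuous_eval_const 1)
  let Hrel : Set (Path x x × Path x x) := ev '' Set.univ
  have hHrelP : Hrel ∈ P (Path x x × Path x x) :=
    himage _ _ ev hevcont _ (hclosed _ _ isClosed_univ)
  have hHrel : ∀ p w : Path x x, (p, w) ∈ Hrel ↔ p.Homotopic w := by
    intro p w
    constructor
    · rintro ⟨g, -, hg⟩
      exact (NCAux.homotopic_iff_joined p w).mpr
        ⟨g, congrArg Prod.fst hg, congrArg Prod.snd hg⟩
    · intro h
      obtain ⟨g, h0, h1⟩ := (NCAux.homotopic_iff_joined p w).mp h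
      exact ⟨g, trivial, by show (g 0, g 1) = (p, w); rw [h0, h1]⟩
  -- the final set identity
  have hSeq : {p : Path x x | F p ∈ Subgroup.normalClosure T}
      = Prod.fst '' (Hrel ∩ (Set.univ ×ˢ ⋃ n, W n)) := by
    ext p
    simp only [Set.mem_setOf_eq, Set.mem_image]
    constructor
    · intro hp
      obtain ⟨n, w, hw, hFw⟩ := keybwd _ hp
      exact ⟨(p, w), ⟨(hHrel p w).mpr (hFhom w p hFw).symm,
        ⟨trivial, Set.mem_iUnion.mpr ⟨n, hw⟩⟩⟩, rfl⟩
    · rintro ⟨⟨p', w⟩, ⟨hrel, ⟨-, hw⟩⟩, rfl⟩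
      obtain ⟨n, hwn⟩ := Set.mem_iUnion.mp hw
      have h1 := keyfwd n w hwn
      have h2 : F p' = F w := hFcong _ _ ((hHrel _ _).mp hrel)
      show F p' ∈ _
      rw [h2]
      exact h1
  show {p : Path x x | F p ∈ Subgroup.normalClosure T} ∈ P (Path x x)
  rw [hSeq]
  exact himage _ _ Prod.fst continuous_fst _
    (hinter _ _ hHrelP _ (hprod _ _ _ (hclosed _ _ isClosed_univ) _ (hunion _ W hWP)))
end

section
/- Let X be a locally path-connected metric space that is κ-Lindelöf, and let G be a noncommutatively slender (n-slender) group. Then the image of any homomorphism φ : π₁(X) → G has cardinality at most κ. -/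
open FundamentalGroup

attribute [local instance] Path.Homotopic.setoid

/-- A grid point `k / (n+1)` in the unit interval. -/
private noncomputable def gridpt (n : ℕ) (k : Fin (n + 2)) : unitInterval :=
  ⟨(k : ℝ) / (n + 1), by
    constructor
    · positivity
    · rw [div_le_one (by positivity)]
      have hk : (k : ℕ) ≤ n + 1 := Nat.lt_succ_iff.mp k.2
      exact_mod_cast hk⟩

open Cardinal in
private lemma card_le_of_sep {Y : Type} [MetricSpace Y] {κ : Cardinal} (hκ : ℵ₀ ≤ κ)
    {S : Set Y} (hS : Dense S) (hScard : #S ≤ κ)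
    {ι : Type} (F : ι → C(unitInterval, Y)) (ε : ι → ℚ) (hε : ∀ i, 0 < ε i)
    (hsep : ∀ i j, i ≠ j → (ε i : ℝ) ≤ dist (F i) (F j)) :
    Cardinal.mk ι ≤ κ := by
  classical
  have hex : ∀ i : ι, ∃ d : ℚ × Σ n : ℕ, (Fin (n + 2) → S), d.1 = ε i ∧
      (∀ t t' : unitInterval, dist t t' ≤ 1 / ((d.2.1 : ℝ) + 1) →
        dist (F i t) (F i t') < (d.1 : ℝ) / 8) ∧
      (∀ k : Fin (d.2.1 + 2), dist (F i (gridpt d.2.1 k)) (d.2.2 k : Y) < (d.1 : ℝ) / 8) := by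
    intro i
    have h8 : (0 : ℝ) < (ε i : ℝ) / 8 := by
      have := hε i; positivity
    have uc := CompactSpace.uniformContinuous_of_continuous (F i).continuous
    rw [Metric.uniformContinuous_iff] at uc
    obtain ⟨δ, hδ, hδ'⟩ := uc _ h8
    obtain ⟨n, hn⟩ := exists_nat_one_div_lt hδ
    have hs : ∀ k : Fin (n + 2), ∃ s : S, dist (F i (gridpt n k)) (s : Y) < (ε i : ℝ) / 8 := by
      intro k
      obtain ⟨y, hy⟩ := Metric.dense_iff.mp hS (F i (gridpt n k)) _ h8
      refine ⟨⟨y, hy.2⟩, ?_⟩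
      rw [dist_comm]
      exact Metric.mem_ball.mp hy.1
    choose sf hsf using hs
    exact ⟨⟨ε i, ⟨n, sf⟩⟩, rfl, fun t t' ht => hδ' (lt_of_le_of_lt ht hn), hsf⟩
  choose d hd using hex
  have hinj : Function.Injective d := by
    intro i j hij
    by_contra hne
    have h1 := hd i
    rw [hij] at h1
    have h2 := hd j
    have hεij : ε i = ε j := by rw [← h1.1, h2.1]
    have hcpos : (0 : ℝ) < ((d j).1 : ℝ) := by
      rw [h2.1]; exact_mod_cast hε j
    have hlt : dist (F i) (F j) < ((d j).1 : ℝ) := by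
      rw [ContinuousMap.dist_lt_iff hcpos]
      intro t
      have hpos : (0 : ℝ) < ((d j).2.1 : ℝ) + 1 := by positivity
      set n := (d j).2.1 with hn
      set k0 := ⌊(t : ℝ) * ((n : ℝ) + 1)⌋₊ with hk0def
      have htmul : (t : ℝ) * ((n : ℝ) + 1) ≤ (n : ℝ) + 1 := by
        nlinarith [t.2.1, t.2.2]
      have hk0 : k0 < n + 2 := by
        have : k0 ≤ ⌊((n + 1 : ℕ) : ℝ)⌋₊ := Nat.floor_le_floor (by push_cast; linarith)
        rw [Nat.floor_natCast] at this
        omega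
      set k : Fin (n + 2) := ⟨k0, hk0⟩ with hkdef
      have hfl : (k0 : ℝ) ≤ (t : ℝ) * ((n : ℝ) + 1) :=
        Nat.floor_le (mul_nonneg t.2.1 (by positivity))
      have hfl2 : (t : ℝ) * ((n : ℝ) + 1) < (k0 : ℝ) + 1 := Nat.lt_floor_add_one _
      have hgrid : ((gridpt n k : unitInterval) : ℝ) = (k0 : ℝ) / ((n : ℝ) + 1) := rfl
      have hdist : dist t (gridpt n k) ≤ 1 / ((n : ℝ) + 1) := by
        rw [Subtype.dist_eq, Real.dist_eq, hgrid]
        have hle : (k0 : ℝ) / ((n : ℝ) + 1) ≤ (t : ℝ) := by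
          rw [div_le_iff₀ hpos]; exact hfl
        have hlt' : (t : ℝ) - (k0 : ℝ) / ((n : ℝ) + 1) ≤ 1 / ((n : ℝ) + 1) := by
          rw [sub_le_iff_le_add, ← add_div, le_div_iff₀ hpos]
          linarith
        rw [abs_of_nonneg (by linarith)]
        exact hlt'
      have hti := h1.2.1 t (gridpt n k) hdist
      have htj := h2.2.1 t (gridpt n k) hdist
      have hsi := h1.2.2 k
      have hsj := h2.2.2 k
      have tri := dist_triangle4 (F i t) (F i (gridpt n k)) (F j (gridpt n k)) (F j t)
      have mid : dist (F i (gridpt n k)) (F j (gridpt n k)) ≤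
          dist (F i (gridpt n k)) ((d j).2.2 k : Y) +
            dist (F j (gridpt n k)) ((d j).2.2 k : Y) :=
        dist_triangle_right _ _ _
      have hcomm : dist (F j (gridpt n k)) (F j t) = dist (F j t) (F j (gridpt n k)) :=
        dist_comm _ _
      linarith
    have := hsep i j hne
    rw [hεij, ← h2.1] at this
    linarith
  have hcard : #(ℚ × Σ n : ℕ, (Fin (n + 2) → S)) ≤ κ := by
    have hsig : #(Σ n : ℕ, (Fin (n + 2) → S)) ≤ κ := by
      rw [Cardinal.mk_sigma]
      have hbound : ∀ n : ℕ, #(Fin (n + 2) → S) ≤ κ := by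
        intro n
        rw [Cardinal.mk_arrow, Cardinal.lift_id, Cardinal.lift_id, Cardinal.mk_fin]
        calc #S ^ ((n + 2 : ℕ) : Cardinal) ≤ κ ^ ((n + 2 : ℕ) : Cardinal) :=
              Cardinal.power_le_power_right hScard
          _ ≤ κ := Cardinal.pow_le hκ (Cardinal.nat_lt_aleph0 _)
      calc (Cardinal.sum fun n : ℕ => #(Fin (n + 2) → S)) ≤ Cardinal.sum fun _ : ℕ => κ :=
            Cardinal.sum_le_sum _ _ hbound
        _ = #ℕ * κ := Cardinal.sum_const' _ _
        _ = ℵ₀ * κ := by rw [Cardinal.mk_nat]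
        _ ≤ κ * κ := mul_le_mul' hκ le_rfl
        _ = κ := Cardinal.mul_eq_self hκ
    calc #(ℚ × Σ n : ℕ, (Fin (n + 2) → S)) = #ℚ * #(Σ n : ℕ, (Fin (n + 2) → S)) := by
          rw [Cardinal.mk_prod, Cardinal.lift_id, Cardinal.lift_id]
      _ ≤ ℵ₀ * κ := by
          exact mul_le_mul' (le_of_eq Cardinal.mkRat) hsig
      _ ≤ κ * κ := mul_le_mul' hκ le_rfl
      _ = κ := Cardinal.mul_eq_self hκ
  exact (Cardinal.mk_le_of_injective hinj).trans hcard

private lemma fromPath_trans_symm' {X : Type} [TopologicalSpace X] {x : X} (p q : Path x x) :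
    (fromPath (X := TopCat.of X) (⟦q.trans p.symm⟧ : Path.Homotopic.Quotient x x)) =
      (fromPath (X := TopCat.of X) (⟦p⟧ : Path.Homotopic.Quotient x x))⁻¹ *
        fromPath (X := TopCat.of X) (⟦q⟧ : Path.Homotopic.Quotient x x) :=
  rfl

private lemma fromPath_toPath' {X : Type} [TopologicalSpace X] {x : X}
    (a : FundamentalGroup X x) :
    fromPath (X := TopCat.of X) (toPath a) = a :=
  rfl

open Cardinal in
private lemma range_card_aux {X : Type} [MetricSpace X] {κ : Cardinal} (hκ : ℵ₀ ≤ κ)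
    {S : Set X} (hS : Dense S) (hScard : #S ≤ κ) {G : Type} [Group G] {x : X}
    (f : Path x x → G) (hfiber : ∀ p : Path x x, IsOpen {q : Path x x | f q = f p}) :
    #(Set.range f) ≤ κ := by
  classical
  have hrep : ∀ i : Set.range f, ∃ p : Path x x, f p = (i : G) := fun i => i.2
  choose rep hrep' using hrep
  have hball : ∀ i : Set.range f, ∃ ε : ℚ, 0 < ε ∧ ∀ q : Path x x,
      dist (q : C(unitInterval, X)) ((rep i : Path x x) : C(unitInterval, X)) < (ε : ℝ) →
        f q = (i : G) := by
    intro i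
    have hU : IsOpen {q : Path x x | f q = (i : G)} := by
      have := hfiber (rep i)
      rwa [hrep' i] at this
    obtain ⟨V, hV, hVeq⟩ := isOpen_induced_iff.mp hU
    have hmem : ((rep i : Path x x) : C(unitInterval, X)) ∈ V := by
      have : rep i ∈ {q : Path x x | f q = (i : G)} := hrep' i
      rw [← hVeq] at this
      exact this
    obtain ⟨ε, hεpos, hεball⟩ := Metric.isOpen_iff.mp hV _ hmem
    obtain ⟨r, hr0, hrε⟩ := exists_rat_btwn hεpos
    refine ⟨r, by exact_mod_cast hr0, fun q hq => ?_⟩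
    have hqV : (q : C(unitInterval, X)) ∈ V := hεball (Metric.mem_ball.mpr (hq.trans hrε))
    show q ∈ {q : Path x x | f q = (i : G)}
    rw [← hVeq]
    exact hqV
  choose ε hε1 hε2 using hball
  refine card_le_of_sep hκ hS hScard
    (fun i : Set.range f => ((rep i : Path x x) : C(unitInterval, X))) ε hε1 ?_
  intro i j hne
  by_contra hlt
  push_neg at hlt
  have : f (rep j) = (i : G) := by
    apply hε2 i
    rw [dist_comm]
    exact hlt
  rw [hrep' j] at this
  exact hne (Subtype.ext this.symm)

/-- A group `G` is noncommutatively slender (n-slender), via the alternative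
characterization: for every locally path-connected (path-connected) metric space `Y`,
every homomorphism `π₁(Y) → G` has open kernel (the set of representing loops is open in
the loop space with the sup metric). -/
def IsNSlender (G : Type) [Group G] : Prop :=
  ∀ (Y : Type) [MetricSpace Y] [PathConnectedSpace Y] [LocallyPathConnectedSpace Y]
    (y : Y) (φ : FundamentalGroup Y y →* G),
    IsOpen {p : Path y y |
      φ (FundamentalGroup.fromPath (X := TopCat.of Y)
        (⟦p⟧ : Path.Homotopic.Quotient y y)) = 1}

/-- If `X` is a locally path-connected metric space that is `κ`-Lindelöf (equivalently,
has a dense subset of cardinality at most `κ`) and `G` is n-slender, then the image of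
any homomorphism `φ : π₁(X) → G` has cardinality at most `κ`. -/
theorem image_card_le_of_nslender {X : Type} [MetricSpace X] [PathConnectedSpace X]
    [LocallyPathConnectedSpace X] (κ : Cardinal) (hκ : Cardinal.aleph0 ≤ κ)
    (hLindelof : ∃ s : Set X, Dense s ∧ Cardinal.mk s ≤ κ)
    (G : Type) [Group G] (hG : IsNSlender G)
    (x : X) (φ : FundamentalGroup X x →* G) :
    Cardinal.mk (Set.range φ) ≤ κ := by
  classical
  obtain ⟨S, hS, hScard⟩ := hLindelof
  have hK : IsOpen {p : Path x x |
      φ (FundamentalGroup.fromPath (X := TopCat.of X)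
        (⟦p⟧ : Path.Homotopic.Quotient x x)) = 1} := hG X x φ
  have hfiber : ∀ p : Path x x, IsOpen {q : Path x x |
      φ (FundamentalGroup.fromPath (X := TopCat.of X) (⟦q⟧ : Path.Homotopic.Quotient x x)) =
      φ (FundamentalGroup.fromPath (X := TopCat.of X) (⟦p⟧ : Path.Homotopic.Quotient x x))} := by
    intro p
    have hcont : Continuous fun q : Path x x => q.trans p.symm :=
      continuous_id.path_trans continuous_const
    have heq : {q : Path x x |
        φ (FundamentalGroup.fromPath (X := TopCat.of X) (⟦q⟧ : Path.Homotopic.Quotient x x)) =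
        φ (FundamentalGroup.fromPath (X := TopCat.of X) (⟦p⟧ : Path.Homotopic.Quotient x x))} =
        (fun q : Path x x => q.trans p.symm) ⁻¹' {r : Path x x |
          φ (FundamentalGroup.fromPath (X := TopCat.of X)
            (⟦r⟧ : Path.Homotopic.Quotient x x)) = 1} := by
      ext q
      simp only [Set.mem_setOf_eq, Set.mem_preimage, fromPath_trans_symm' p q, map_mul, map_inv,
        inv_mul_eq_one]
      exact comm
    rw [heq]
    exact hK.preimage hcont
  have hrange : Set.range ⇑φ = Set.range (fun p : Path x x =>
      φ (FundamentalGroup.fromPath (X := TopCat.of X) (⟦p⟧ : Path.Homotopic.Quotient x x))) := by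
    ext g
    constructor
    · rintro ⟨a, rfl⟩
      obtain ⟨p, hp⟩ := Quotient.exists_rep (toPath (X := TopCat.of X) a)
      refine ⟨p, ?_⟩
      show φ (FundamentalGroup.fromPath (X := TopCat.of X)
        (⟦p⟧ : Path.Homotopic.Quotient x x)) = φ a
      rw [show (⟦p⟧ : Path.Homotopic.Quotient x x) = toPath (X := TopCat.of X) a from hp, fromPath_toPath']
    · rintro ⟨p, rfl⟩
      exact ⟨_, rfl⟩
  rw [hrange]
  exact range_card_aux hκ hS hScard _ hfiber
end
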